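/- arXiv:2212.02982 — 5 statements merged into one kernel-verified Lean document; each statement's English description precedes it below -/
import Mathlib

section
/- Let p₁, …, p_q be pairwise distinct points in ℝ^D (D ≥ 1), and suppose the union of closed balls B(p₁, δ) ∪ … ∪ B(p_q, δ) is connected and has diameter at least 2δ(N+1) for a positive integer N. Then there exist an integer s ≥ N+1 and pairwise distinct indices i₁, …, i_s ∈ {1, …, q} such that d(p_{i_j}, p_{i_{j+1}}) ≤ 2δ for each j = 1, …, s−1. -/
open SimpleGraph in
private lemma support_getElem_eq_getVert {V : Type*} {G : SimpleGraph V} :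
    ∀ {a b : V} (w : G.Walk a b) (i : ℕ) (h : i < w.support.length),
      w.support[i] = w.getVert i := by
  intro a b w
  induction w with
  | nil => intro i h; simp at h; subst h; simp
  | cons hadj w ih =>
      intro i h
      cases i with
      | zero => simp
      | succ n =>
          simp only [SimpleGraph.Walk.support_cons, SimpleGraph.Walk.getVert_cons_succ]
          rw [List.getElem_cons_succ]
          exact ih n (by simpa [SimpleGraph.Walk.support_cons] using h)


private lemma walk_dist_le {V : Type*} {M : Type*} [PseudoMetricSpace M] {G : SimpleGraph V}
    {f : V → M} {c : ℝ} (h : ∀ a b, G.Adj a b → dist (f a) (f b) ≤ c) :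
    ∀ {a b : V} (w : G.Walk a b), dist (f a) (f b) ≤ c * w.length := by
  intro a b w
  induction w with
  | nil => simp
  | @cons u v x hadj w ih =>
      calc dist (f u) (f x) ≤ dist (f u) (f v) + dist (f v) (f x) := dist_triangle _ _ _
      _ ≤ c + c * w.length := add_le_add (h u v hadj) ih
      _ = c * (SimpleGraph.Walk.cons hadj w).length := by
          simp [SimpleGraph.Walk.length_cons]; ring

theorem stmt_6 (D : ℕ) (hD : 1 ≤ D) (q : ℕ) (p : Fin q → EuclideanSpace ℝ (Fin D))
    (hp : Function.Injective p) (δ : ℝ) (hδ : 0 < δ) (N : ℕ) (hN : 0 < N)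
    (hconn : IsConnected (⋃ i, Metric.closedBall (p i) δ))
    (hdiam : 2 * δ * (N + 1) ≤ Metric.diam (⋃ i, Metric.closedBall (p i) δ)) :
    ∃ (s : ℕ), N + 1 ≤ s ∧ ∃ i : Fin s → Fin q, Function.Injective i ∧
      ∀ (j : ℕ) (hj1 : j + 1 < s),
        dist (p (i ⟨j, Nat.lt_of_succ_lt hj1⟩)) (p (i ⟨j + 1, hj1⟩)) ≤ 2 * δ := by
  classical
  set S := ⋃ i, Metric.closedBall (p i) δ with hS
  -- the proximity graph
  set G : SimpleGraph (Fin q) :=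
    { Adj := fun a b => a ≠ b ∧ dist (p a) (p b) ≤ 2 * δ
      symm := ⟨by intro a b ⟨h1, h2⟩; exact ⟨h1.symm, by rwa [dist_comm]⟩⟩
      loopless := ⟨by intro a ⟨h1, _⟩; exact h1 rfl⟩ } with hG
  -- the graph is connected
  have hreach : ∀ a b : Fin q, G.Reachable a b := by
    intro a b
    set V : Set (Fin q) := {j | G.Reachable a j} with hV
    set A : Set (EuclideanSpace ℝ (Fin D)) := ⋃ j ∈ V, Metric.closedBall (p j) δ with hA
    set B : Set (EuclideanSpace ℝ (Fin D)) := ⋃ j ∈ Vᶜ, Metric.closedBall (p j) δ with hB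
    have hAclosed : IsClosed A :=
      Set.Finite.isClosed_biUnion (Set.toFinite V) fun j _ => Metric.isClosed_closedBall
    have hBclosed : IsClosed B :=
      Set.Finite.isClosed_biUnion (Set.toFinite Vᶜ) fun j _ => Metric.isClosed_closedBall
    have hdisj : A ∩ B = ∅ := by
      ext x
      simp only [Set.mem_inter_iff, Set.mem_empty_iff_false, iff_false]
      rintro ⟨hxA, hxB⟩
      rw [hA, Set.mem_iUnion₂] at hxA
      rw [hB, Set.mem_iUnion₂] at hxB
      obtain ⟨i, hiV, hxi⟩ := hxA
      obtain ⟨j, hjV, hxj⟩ := hxB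
      have hij : i ≠ j := fun h => hjV (h ▸ hiV)
      have hd : dist (p i) (p j) ≤ 2 * δ := by
        calc dist (p i) (p j) ≤ dist (p i) x + dist x (p j) := dist_triangle _ _ _
        _ ≤ δ + δ := by
            rw [Metric.mem_closedBall] at hxi hxj
            exact add_le_add (by rwa [dist_comm]) hxj
        _ = 2 * δ := by ring
      exact hjV (hiV.trans (SimpleGraph.Adj.reachable ⟨hij, hd⟩))
    have hSsub : S ⊆ A ∪ B := by
      intro x hx
      rw [hS, Set.mem_iUnion] at hx
      obtain ⟨i, hi⟩ := hx
      by_cases hiV : i ∈ V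
      · exact Or.inl (Set.mem_biUnion hiV hi)
      · exact Or.inr (Set.mem_biUnion hiV hi)
    -- use preconnectedness with the open complements
    have hSA : S ⊆ A := by
      by_contra hnot
      obtain ⟨x, hxS, hxA⟩ := Set.not_subset.mp hnot
      have := hconn.isPreconnected Bᶜ Aᶜ hBclosed.isOpen_compl hAclosed.isOpen_compl
        (by
          intro y hy
          rcases hSsub hy with h | h
          · exact Or.inl (fun hB' => Set.eq_empty_iff_forall_notMem.mp hdisj y ⟨h, hB'⟩)
          · exact Or.inr (fun hA' => Set.eq_empty_iff_forall_notMem.mp hdisj y ⟨hA', h⟩))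
        ⟨p a, by
          refine ⟨Set.mem_iUnion.mpr ⟨a, Metric.mem_closedBall_self hδ.le⟩, ?_⟩
          intro hpab
          have hpaa : p a ∈ A := Set.mem_biUnion (by exact SimpleGraph.Reachable.refl a)
            (Metric.mem_closedBall_self hδ.le)
          exact Set.eq_empty_iff_forall_notMem.mp hdisj (p a) ⟨hpaa, hpab⟩⟩
        ⟨x, hxS, hxA⟩
      obtain ⟨y, hyS, hyB, hyA⟩ := this
      rcases hSsub hyS with h | h
      · exact hyA h
      · exact hyB h
    have hpb : p b ∈ A := hSA (Set.mem_iUnion.mpr ⟨b, Metric.mem_closedBall_self hδ.le⟩)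
    rw [hA, Set.mem_iUnion₂] at hpb
    obtain ⟨j, hjV, hxj⟩ := hpb
    by_cases hjb : j = b
    · exact hjb ▸ hjV
    · refine hjV.trans (SimpleGraph.Adj.reachable ⟨hjb, ?_⟩)
      rw [Metric.mem_closedBall] at hxj
      calc dist (p j) (p b) ≤ δ := by rwa [dist_comm]
      _ ≤ 2 * δ := by linarith
  -- find two far-apart points in S
  have hfar : ∃ x ∈ S, ∃ y ∈ S, 2 * δ * (N + 1) - δ < dist x y := by
    by_contra hnot
    push_neg at hnot
    have : Metric.diam S ≤ 2 * δ * (N + 1) - δ :=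
      Metric.diam_le_of_forall_dist_le (by nlinarith) fun x hx y hy => hnot x hx y hy
    nlinarith
  obtain ⟨x, hxS, y, hyS, hxy⟩ := hfar
  rw [hS, Set.mem_iUnion] at hxS hyS
  obtain ⟨a, hxa⟩ := hxS
  obtain ⟨b, hyb⟩ := hyS
  rw [Metric.mem_closedBall] at hxa hyb
  have hab : 2 * δ * N - δ < dist (p a) (p b) := by
    have h1 : dist x y ≤ dist x (p a) + dist (p a) (p b) + dist (p b) y := dist_triangle4 _ _ _ _
    rw [dist_comm (p b) y] at h1
    nlinarith
  -- take a simple path from a to b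
  obtain ⟨w0⟩ := hreach a b
  set w : G.Walk a b := (w0.toPath : G.Path a b).1 with hw
  have hwpath : w.IsPath := w0.toPath.2
  -- walk length bounds distance
  have hadj_dist : ∀ a b : Fin q, G.Adj a b → dist (p a) (p b) ≤ 2 * δ := by
    intro a b hadj
    rw [hG] at hadj
    exact hadj.2
  have hwalkdist : ∀ {a b : Fin q} (u : G.Walk a b), dist (p a) (p b) ≤ 2 * δ * u.length :=
    fun u => walk_dist_le hadj_dist u
  have hlen : N ≤ w.length := by
    by_contra hnot
    push_neg at hnot
    have h1 : (w.length : ℝ) ≤ (N : ℝ) - 1 := by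
      have hn : w.length + 1 ≤ N := hnot
      have : ((w.length : ℕ) : ℝ) + 1 ≤ (N : ℝ) := by exact_mod_cast hn
      linarith
    have h2 := hwalkdist w
    nlinarith
  refine ⟨w.length + 1, by omega, fun j => w.getVert j.val, ?_, ?_⟩
  · intro j1 j2 hj
    have hsl : w.support.length = w.length + 1 := SimpleGraph.Walk.length_support w
    have h1 : w.support[(j1 : ℕ)]'(by omega) = w.support[(j2 : ℕ)]'(by omega) := by
      rw [support_getElem_eq_getVert w j1 (by omega), support_getElem_eq_getVert w j2 (by omega)]
      exact hj
    have := (List.Nodup.getElem_inj_iff hwpath.support_nodup).mp h1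
    exact Fin.ext this
  · intro j hj1
    have hadj : G.Adj (w.getVert j) (w.getVert (j + 1)) :=
      SimpleGraph.Walk.adj_getVert_succ w (by omega)
    exact hadj.2
end

section
/- Let A = {a₁, …, a_t} ⊆ ℝ^N be a set in general position with t ≥ N + 1 (N ≥ 1), and let δ > 0 satisfy δ < λ(A)/(2(t−1)). Then for every linear subspace L ⊆ ℝ^N, each connected component of p_L(B(a₁, δ) ∪ … ∪ B(a_t, δ)) has diameter less than 2δ(N+1). -/
noncomputable def proj {N : ℕ} (L : Submodule ℝ (EuclideanSpace ℝ (Fin N))) :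
    EuclideanSpace ℝ (Fin N) → EuclideanSpace ℝ (Fin N) :=
  fun x => (L.orthogonalProjectionOnto x : EuclideanSpace ℝ (Fin N))

/-- A set of points in ℝ^N is in general position if every subsystem of `k+1` of its
points with `k ≤ N` is affinely independent. -/
def InGenPos (N : ℕ) (A : Set (EuclideanSpace ℝ (Fin N))) : Prop :=
  ∀ s : Finset (EuclideanSpace ℝ (Fin N)), ↑s ⊆ A → s.card ≤ N + 1 →
    AffineIndependent ℝ (fun p : s => (p : EuclideanSpace ℝ (Fin N)))

/-- `λ(A)`: the infimum, over all linear subspaces `L ⊆ ℝ^N` with `dim L ∉ {0, N}`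
(equivalently `L ≠ ⊥` and `L ≠ ⊤`) and all ordered `(N+1)`-tuples of pairwise distinct
points of `A`, of the sums `Σ_{j=1}^{N} d(p_L a_{i_j}, p_L a_{i_{j+1}})`. -/
noncomputable def lambdaA (N : ℕ) (A : Set (EuclideanSpace ℝ (Fin N))) : ℝ :=
  sInf {r : ℝ | ∃ (L : Submodule ℝ (EuclideanSpace ℝ (Fin N)))
    (f : Fin (N + 1) → EuclideanSpace ℝ (Fin N)),
    L ≠ ⊥ ∧ L ≠ ⊤ ∧ Function.Injective f ∧ (∀ j, f j ∈ A) ∧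
    r = ∑ j : Fin N, dist (proj L (f j.castSucc)) (proj L (f j.succ))}

lemma proj_dist_le {N : ℕ} (L : Submodule ℝ (EuclideanSpace ℝ (Fin N)))
    (x y : EuclideanSpace ℝ (Fin N)) : dist (proj L x) (proj L y) ≤ dist x y := by
  have h1 : proj L x - proj L y
      = ((L.orthogonalProjectionOnto (x - y) : L) : EuclideanSpace ℝ (Fin N)) := by
    simp [proj, map_sub]
  rw [dist_eq_norm, dist_eq_norm, h1]
  calc ‖((L.orthogonalProjectionOnto (x - y) : L) : EuclideanSpace ℝ (Fin N))‖
      = ‖L.orthogonalProjectionOnto (x - y)‖ := rfl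
    _ ≤ ‖L.orthogonalProjectionOnto‖ * ‖x - y‖ := (L.orthogonalProjectionOnto).le_opNorm _
    _ ≤ 1 * ‖x - y‖ := by
        gcongr
        exact Submodule.orthogonalProjectionOnto_norm_le L
    _ = ‖x - y‖ := one_mul _

lemma proj_top {N : ℕ} (x : EuclideanSpace ℝ (Fin N)) :
    proj (⊤ : Submodule ℝ (EuclideanSpace ℝ (Fin N))) x = x :=
  Submodule.starProjection_eq_self_iff.mpr trivial

lemma proj_continuous {N : ℕ} (L : Submodule ℝ (EuclideanSpace ℝ (Fin N))) :
    Continuous (proj L) :=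
  continuous_subtype_val.comp (L.orthogonalProjectionOnto).continuous

lemma getVert_injOn' {V : Type*} {G : SimpleGraph V} :
    ∀ {u v : V} (p : G.Walk u v), p.IsPath → ∀ {i j : ℕ}, i ≤ p.length → j ≤ p.length →
      p.getVert i = p.getVert j → i = j := by
  intro u v p
  induction p with
  | nil => intro _ i j hi hj _; simp at hi hj; omega
  | cons h q ih =>
    intro hp i j hi hj heq
    have hq : _ ∧ _ := (SimpleGraph.Walk.cons_isPath_iff _ _).mp hp
    match i, j with
    | 0, 0 => rfl
    | 0, (m+1) =>
      exfalso; apply hq.2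
      rw [SimpleGraph.Walk.mem_support_iff_exists_getVert]
      refine ⟨m, ?_, ?_⟩
      · simpa [SimpleGraph.Walk.getVert_cons_succ] using heq.symm
      · simpa using hj
    | (m+1), 0 =>
      exfalso; apply hq.2
      rw [SimpleGraph.Walk.mem_support_iff_exists_getVert]
      refine ⟨m, ?_, ?_⟩
      · simpa [SimpleGraph.Walk.getVert_cons_succ] using heq
      · simpa using hi
    | (m+1), (n+1) =>
      have := ih hq.1 (i := m) (j := n) (by simpa using hi) (by simpa using hj)
        (by simpa [SimpleGraph.Walk.getVert_cons_succ] using heq)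
      omega

lemma lambdaA_bddBelow (N : ℕ) (A : Set (EuclideanSpace ℝ (Fin N))) :
    BddBelow {r : ℝ | ∃ (L : Submodule ℝ (EuclideanSpace ℝ (Fin N)))
      (f : Fin (N + 1) → EuclideanSpace ℝ (Fin N)),
      L ≠ ⊥ ∧ L ≠ ⊤ ∧ Function.Injective f ∧ (∀ j, f j ∈ A) ∧
      r = ∑ j : Fin N, dist (proj L (f j.castSucc)) (proj L (f j.succ))} := by
  refine ⟨0, fun r hr => ?_⟩
  obtain ⟨L, f, _, _, _, _, rfl⟩ := hr
  exact Finset.sum_nonneg fun j _ => dist_nonneg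

lemma lambdaA_le {N : ℕ} (hN2 : 2 ≤ N) (A : Set (EuclideanSpace ℝ (Fin N)))
    (L : Submodule ℝ (EuclideanSpace ℝ (Fin N))) (hL : L ≠ ⊥)
    (f : Fin (N + 1) → EuclideanSpace ℝ (Fin N)) (hf : Function.Injective f)
    (hfA : ∀ j, f j ∈ A) :
    lambdaA N A ≤ ∑ j : Fin N, dist (proj L (f j.castSucc)) (proj L (f j.succ)) := by
  by_cases hT : L = ⊤
  · subst hT
    set v : EuclideanSpace ℝ (Fin N) := EuclideanSpace.single (⟨0, by omega⟩ : Fin N) (1 : ℝ)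
      with hv
    have hv0 : v ≠ 0 := by
      intro h
      have := congrArg (fun w : EuclideanSpace ℝ (Fin N) => w (⟨0, by omega⟩ : Fin N)) h
      simp [hv, EuclideanSpace.single_apply] at this
    set L' : Submodule ℝ (EuclideanSpace ℝ (Fin N)) := ℝ ∙ v with hL'
    have hL'bot : L' ≠ ⊥ := by
      rw [hL', Submodule.span_singleton_eq_bot.ne]
      exact hv0
    have hL'top : L' ≠ ⊤ := by
      intro h
      have h1 : Module.finrank ℝ L' = 1 := finrank_span_singleton hv0
      rw [h] at h1
      rw [finrank_top] at h1
      rw [finrank_euclideanSpace_fin] at h1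
      omega
    calc lambdaA N A ≤ ∑ j : Fin N, dist (proj L' (f j.castSucc)) (proj L' (f j.succ)) :=
          csInf_le (lambdaA_bddBelow N A) ⟨L', f, hL'bot, hL'top, hf, hfA, rfl⟩
      _ ≤ ∑ j : Fin N, dist (proj ⊤ (f j.castSucc)) (proj ⊤ (f j.succ)) := by
          apply Finset.sum_le_sum
          intro j _
          rw [proj_top, proj_top]
          exact proj_dist_le _ _ _
  · exact csInf_le (lambdaA_bddBelow N A) ⟨L, f, hL, hT, hf, hfA, rfl⟩

lemma lambdaA_one_eq_zero (A : Set (EuclideanSpace ℝ (Fin 1))) : lambdaA 1 A = 0 := by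
  have he : {r : ℝ | ∃ (L : Submodule ℝ (EuclideanSpace ℝ (Fin 1)))
      (f : Fin 2 → EuclideanSpace ℝ (Fin 1)),
      L ≠ ⊥ ∧ L ≠ ⊤ ∧ Function.Injective f ∧ (∀ j, f j ∈ A) ∧
      r = ∑ j : Fin 1, dist (proj L (f j.castSucc)) (proj L (f j.succ))} = ∅ := by
    ext r
    simp only [Set.mem_setOf_eq, Set.mem_empty_iff_false, iff_false]
    rintro ⟨L, f, hbot, htop, -⟩
    have h1 : Module.finrank ℝ L ≤ 1 := by
      have := Submodule.finrank_le L
      rwa [finrank_euclideanSpace_fin] at this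
    interval_cases h : Module.finrank ℝ L
    · exact hbot (Submodule.finrank_eq_zero.mp h)
    · exact htop (Submodule.eq_top_of_finrank_eq (by rw [finrank_euclideanSpace_fin]; exact h))
  rw [lambdaA, he, Real.sInf_empty]

theorem stmt_8 (N : ℕ) (hN : 1 ≤ N) (t : ℕ) (ht : N + 1 ≤ t)
    (a : Fin t → EuclideanSpace ℝ (Fin N)) (ha : Function.Injective a)
    (hgp : InGenPos N (Set.range a)) (δ : ℝ) (hδ : 0 < δ)
    (hdlam : δ < lambdaA N (Set.range a) / (2 * (t - 1 : ℝ)))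
    (L : Submodule ℝ (EuclideanSpace ℝ (Fin N))) :
    ∀ z ∈ proj L '' (⋃ i, Metric.closedBall (a i) δ),
      Metric.diam (connectedComponentIn (proj L '' (⋃ i, Metric.closedBall (a i) δ)) z)
        < 2 * δ * (N + 1) := by
  intro z hz
  have hNpos : (0:ℝ) < 2 * δ * ((N:ℝ) + 1) := by positivity
  by_cases hLbot : L = ⊥
  · -- projection is constant 0, everything is a single point
    subst hLbot
    have hproj : ∀ x : EuclideanSpace ℝ (Fin N),
        proj (⊥ : Submodule ℝ (EuclideanSpace ℝ (Fin N))) x = 0 := by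
      intro x
      simp [proj, Submodule.orthogonalProjectionOnto_bot]
    have hsub : connectedComponentIn
        (proj (⊥ : Submodule ℝ (EuclideanSpace ℝ (Fin N))) ''
          (⋃ i, Metric.closedBall (a i) δ)) z ⊆ {0} := by
      refine (connectedComponentIn_subset _ _).trans ?_
      rintro x ⟨y, -, rfl⟩
      simp [hproj]
    calc Metric.diam _ = 0 := Metric.diam_subsingleton (Set.subsingleton_singleton.anti hsub)
      _ < 2 * δ * ((N:ℝ) + 1) := hNpos
  rcases Nat.lt_or_ge N 2 with hN1 | hN2
  · -- N = 1 : vacuous hypothesis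
    exfalso
    have hNeq : N = 1 := by omega
    subst hNeq
    rw [lambdaA_one_eq_zero, zero_div] at hdlam
    linarith
  -- main case : N ≥ 2 and L ≠ ⊥
  have htR : (N:ℝ) ≤ (t:ℝ) - 1 := by
    have : ((N:ℝ) + 1) ≤ (t:ℝ) := by exact_mod_cast ht
    linarith
  have h2t : (0:ℝ) < 2 * ((t:ℝ) - 1) := by
    have h1 : (1:ℝ) ≤ (N:ℝ) := by exact_mod_cast hN
    linarith
  have hlam : 2 * δ * (N:ℝ) < lambdaA N (Set.range a) := by
    rw [lt_div_iff₀ h2t] at hdlam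
    calc 2 * δ * (N:ℝ) ≤ δ * (2 * ((t:ℝ) - 1)) := by nlinarith
      _ < lambdaA N (Set.range a) := hdlam
  -- the intersection graph of the projected balls
  set G : SimpleGraph (Fin t) :=
    SimpleGraph.fromRel (fun i j => dist (proj L (a i)) (proj L (a j)) ≤ 2 * δ) with hG
  have hGadj : ∀ i j, G.Adj i j → dist (proj L (a i)) (proj L (a j)) ≤ 2 * δ := by
    intro i j hij
    rw [hG, SimpleGraph.fromRel_adj] at hij
    rcases hij.2 with h | h
    · exact h
    · rwa [dist_comm]
  have hGadj' : ∀ i j, i ≠ j → dist (proj L (a i)) (proj L (a j)) ≤ 2 * δ → G.Adj i j := by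
    intro i j hne hd
    rw [hG, SimpleGraph.fromRel_adj]
    exact ⟨hne, Or.inl hd⟩
  -- no path in G has N or more edges
  have hpath : ∀ (i j : Fin t) (p : G.Walk i j), p.IsPath → p.length < N := by
    intro i j p hp
    by_contra hlen
    push_neg at hlen
    set f : Fin (N+1) → EuclideanSpace ℝ (Fin N) := fun k => a (p.getVert k) with hf
    have hfinj : Function.Injective f := by
      intro k1 k2 hk
      have hgv := ha hk
      have h1 : (k1:ℕ) ≤ p.length := le_trans (Nat.le_of_lt_succ k1.isLt) hlen
      have h2 : (k2:ℕ) ≤ p.length := le_trans (Nat.le_of_lt_succ k2.isLt) hlen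
      exact Fin.ext (getVert_injOn' p hp h1 h2 hgv)
    have hfA : ∀ k, f k ∈ Set.range a := fun k => Set.mem_range_self _
    have hsum : ∑ j : Fin N, dist (proj L (f j.castSucc)) (proj L (f j.succ))
        ≤ 2 * δ * (N:ℝ) := by
      calc ∑ j : Fin N, dist (proj L (f j.castSucc)) (proj L (f j.succ))
          ≤ ∑ _j : Fin N, 2 * δ := by
            apply Finset.sum_le_sum
            intro k _
            have hadj := p.adj_getVert_succ (i := (k:ℕ)) (lt_of_lt_of_le k.isLt hlen)
            have hd := hGadj _ _ hadj
            simpa [hf, Fin.coe_castSucc, Fin.val_succ] using hd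
        _ = 2 * δ * (N:ℝ) := by
            rw [Finset.sum_const]
            simp [mul_comm]
    have hle := lambdaA_le hN2 (Set.range a) L hLbot f hfinj hfA
    linarith
  -- distance bound along a walk
  have hwalk : ∀ (i j : Fin t) (p : G.Walk i j),
      dist (proj L (a i)) (proj L (a j)) ≤ 2 * δ * p.length := by
    intro i j p
    induction p with
    | nil => simp
    | @cons u v w h q ih =>
      have h1 : dist (proj L (a u)) (proj L (a v)) ≤ 2 * δ := hGadj _ _ h
      calc dist (proj L (a u)) (proj L (a w))
          ≤ dist (proj L (a u)) (proj L (a v)) + dist (proj L (a v)) (proj L (a w)) :=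
            dist_triangle _ _ _
        _ ≤ 2 * δ + 2 * δ * q.length := by linarith
        _ = 2 * δ * (q.cons h).length := by
            rw [SimpleGraph.Walk.length_cons]
            push_cast
            ring
  -- reachable centers are within 2δ(N-1)
  have hreach : ∀ i j : Fin t, G.Reachable i j →
      dist (proj L (a i)) (proj L (a j)) ≤ 2 * δ * ((N:ℝ) - 1) := by
    intro i j h
    obtain ⟨w⟩ := h
    have hlen : w.toPath.1.length < N := hpath i j w.toPath.1 w.toPath.2
    have hlenR : (w.toPath.1.length : ℝ) ≤ (N:ℝ) - 1 := by
      have h1 : w.toPath.1.length + 1 ≤ N := hlen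
      have h2 : ((w.toPath.1.length : ℝ) + 1) ≤ (N:ℝ) := by exact_mod_cast h1
      linarith
    calc dist (proj L (a i)) (proj L (a j)) ≤ 2 * δ * w.toPath.1.length := hwalk i j w.toPath.1
      _ ≤ 2 * δ * ((N:ℝ) - 1) := by
          apply mul_le_mul_of_nonneg_left hlenR
          linarith
  -- decompose the image into reachable and unreachable parts
  obtain ⟨w0, hw0, rfl⟩ := hz
  obtain ⟨i0, hi0⟩ := Set.mem_iUnion.mp hw0
  set S : Set (EuclideanSpace ℝ (Fin N)) := proj L '' (⋃ i, Metric.closedBall (a i) δ) with hS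
  set K : Set (Fin t) := {j | G.Reachable i0 j} with hK
  set D : Fin t → Set (EuclideanSpace ℝ (Fin N)) :=
    fun i => proj L '' Metric.closedBall (a i) δ with hD
  have hDdist : ∀ i, ∀ x ∈ D i, dist x (proj L (a i)) ≤ δ := by
    rintro i x ⟨y, hy, rfl⟩
    exact le_trans (proj_dist_le L y (a i)) (Metric.mem_closedBall.mp hy)
  have hDcomp : ∀ i, IsCompact (D i) :=
    fun i => (isCompact_closedBall _ _).image (proj_continuous L)
  set U : Set (EuclideanSpace ℝ (Fin N)) := ⋃ i ∈ K, D i with hU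
  set V : Set (EuclideanSpace ℝ (Fin N)) := ⋃ i ∈ Kᶜ, D i with hV
  have hUc : IsClosed U :=
    Set.Finite.isClosed_biUnion (Set.toFinite K) (fun i _ => (hDcomp i).isClosed)
  have hVc : IsClosed V :=
    Set.Finite.isClosed_biUnion (Set.toFinite Kᶜ) (fun i _ => (hDcomp i).isClosed)
  have hSUV : S ⊆ U ∪ V := by
    rintro x ⟨y, hy, rfl⟩
    obtain ⟨i, hi⟩ := Set.mem_iUnion.mp hy
    by_cases h : i ∈ K
    · exact Or.inl (Set.mem_biUnion h ⟨y, hi, rfl⟩)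
    · exact Or.inr (Set.mem_biUnion h ⟨y, hi, rfl⟩)
  have hUVdisj : U ∩ V = ∅ := by
    by_contra h
    obtain ⟨x, hxU, hxV⟩ := Set.nonempty_iff_ne_empty.mpr h
    obtain ⟨i, hiK, hxDi⟩ := Set.mem_iUnion₂.mp hxU
    obtain ⟨j, hjK, hxDj⟩ := Set.mem_iUnion₂.mp hxV
    have hij : i ≠ j := fun hE => hjK (hE ▸ hiK)
    have hd : dist (proj L (a i)) (proj L (a j)) ≤ 2 * δ := by
      calc dist (proj L (a i)) (proj L (a j))
          ≤ dist (proj L (a i)) x + dist x (proj L (a j)) := dist_triangle _ _ _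
        _ ≤ δ + δ := by
            have h1 := hDdist i x hxDi
            have h2 := hDdist j x hxDj
            rw [dist_comm (proj L (a i)) x]
            linarith
        _ = 2 * δ := by ring
    exact hjK (hiK.trans (hGadj' i j hij hd).reachable)
  have hzS : proj L w0 ∈ S := ⟨w0, hw0, rfl⟩
  have hCS : connectedComponentIn S (proj L w0) ⊆ S := connectedComponentIn_subset _ _
  have hCpre : IsPreconnected (connectedComponentIn S (proj L w0)) :=
    isPreconnected_connectedComponentIn
  have hzU : proj L w0 ∈ U :=
    Set.mem_biUnion (show i0 ∈ K from SimpleGraph.Reachable.refl i0) ⟨w0, hi0, rfl⟩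
  have hCU : connectedComponentIn S (proj L w0) ⊆ U := by
    by_contra hcu
    obtain ⟨x, hxC, hxU⟩ := Set.not_subset.mp hcu
    have hxV : x ∈ V := (hSUV (hCS hxC)).resolve_left hxU
    obtain ⟨y, hy⟩ := isPreconnected_closed_iff.mp hCpre U V hUc hVc (hCS.trans hSUV)
      ⟨proj L w0, mem_connectedComponentIn hzS, hzU⟩ ⟨x, hxC, hxV⟩
    rw [hUVdisj] at hy
    exact hy.2
  have hbound : ∀ x ∈ connectedComponentIn S (proj L w0),
      ∀ y ∈ connectedComponentIn S (proj L w0), dist x y ≤ 2 * δ * (N:ℝ) := by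
    intro x hx y hy
    obtain ⟨i, hiK, hxDi⟩ := Set.mem_iUnion₂.mp (hCU hx)
    obtain ⟨j, hjK, hyDj⟩ := Set.mem_iUnion₂.mp (hCU hy)
    have hr : G.Reachable i j := hiK.symm.trans hjK
    calc dist x y
        ≤ dist x (proj L (a i)) + dist (proj L (a i)) (proj L (a j))
            + dist (proj L (a j)) y := dist_triangle4 _ _ _ _
      _ ≤ δ + 2 * δ * ((N:ℝ) - 1) + δ := by
          have h1 := hDdist i x hxDi
          have h2 := hDdist j y hyDj
          have h3 := hreach i j hr
          rw [dist_comm (proj L (a j)) y]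
          linarith
      _ = 2 * δ * (N:ℝ) := by ring
  have hdiam := Metric.diam_le_of_forall_dist_le
    (by positivity : (0:ℝ) ≤ 2 * δ * (N:ℝ)) hbound
  calc Metric.diam (connectedComponentIn S (proj L w0)) ≤ 2 * δ * (N:ℝ) := hdiam
    _ < 2 * δ * ((N:ℝ) + 1) := by nlinarith
end

section
/- For each N ≥ 1, the evaluation map ℰ : Emb(𝒞, ℝ^N) → 𝒞(ℝ^N), f ↦ f(𝒞), is a continuous open surjection. -/
open Set Metric Topology

set_option linter.unusedSectionVars false
set_option linter.unusedVariables false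


lemma preCantorSet_subset_Icc (n : ℕ) : preCantorSet n ⊆ Set.Icc 0 1 := by
  induction n with
  | zero => exact subset_rfl
  | succ n ih =>
    rintro x (⟨y, hy, rfl⟩ | ⟨y, hy, rfl⟩) <;> obtain ⟨h0, h1⟩ := ih hy <;>
      constructor <;> [linarith; linarith; linarith; linarith]

lemma one_mem_preCantorSet (n : ℕ) : 1 ∈ preCantorSet n := by
  induction n with
  | zero => exact ⟨zero_le_one, le_refl 1⟩
  | succ n ih => exact Or.inr ⟨1, ih, by norm_num⟩

lemma one_mem_cantorSet : 1 ∈ cantorSet := Set.mem_iInter.mpr one_mem_preCantorSet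

lemma cantorSet_div_three {x : ℝ} (hx : x ∈ cantorSet) : x / 3 ∈ cantorSet := by
  rw [cantorSet, Set.mem_iInter] at *
  intro n
  cases n with
  | zero =>
    obtain ⟨h0, h1⟩ := preCantorSet_subset_Icc 0 (hx 0)
    exact ⟨by linarith, by linarith⟩
  | succ n => exact Or.inl ⟨x, hx n, rfl⟩

lemma cantorSet_two_add_div_three {x : ℝ} (hx : x ∈ cantorSet) : (2 + x) / 3 ∈ cantorSet := by
  rw [cantorSet, Set.mem_iInter] at *
  intro n
  cases n with
  | zero =>
    obtain ⟨h0, h1⟩ := preCantorSet_subset_Icc 0 (hx 0)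
    exact ⟨by linarith, by linarith⟩
  | succ n => exact Or.inr ⟨x, hx n, rfl⟩

lemma cantorSet_cases {x : ℝ} (hx : x ∈ cantorSet) : x ≤ 1/3 ∨ 2/3 ≤ x := by
  have h1 : x ∈ preCantorSet 1 := Set.mem_iInter.mp hx 1
  rcases h1 with ⟨y, hy, rfl⟩ | ⟨y, hy, rfl⟩ <;> obtain ⟨h0, h1⟩ := preCantorSet_subset_Icc 0 hy
  · left; linarith
  · right; linarith

lemma cantorSet_three_mul {x : ℝ} (hx : x ∈ cantorSet) (hx3 : x ≤ 1/3) :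
    3 * x ∈ cantorSet := by
  rw [cantorSet, Set.mem_iInter] at *
  intro n
  rcases hx (n+1) with ⟨y, hy, hxy⟩ | ⟨y, hy, hxy⟩
  · have : 3 * x = y := by rw [← hxy]; ring
    rwa [this]
  · obtain ⟨h0, h1⟩ := preCantorSet_subset_Icc n hy
    exfalso; rw [← hxy] at hx3; linarith

lemma cantorSet_three_mul_sub {x : ℝ} (hx : x ∈ cantorSet) (hx3 : 2/3 ≤ x) :
    3 * x - 2 ∈ cantorSet := by
  rw [cantorSet, Set.mem_iInter] at *
  intro n
  rcases hx (n+1) with ⟨y, hy, hxy⟩ | ⟨y, hy, hxy⟩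
  · obtain ⟨h0, h1⟩ := preCantorSet_subset_Icc n hy
    exfalso; rw [← hxy] at hx3; linarith
  · have : 3 * x - 2 = y := by rw [← hxy]; ring
    rwa [this]

/-- metric perfectness of the Cantor set -/
lemma cantorSet_perfect_aux (n : ℕ) :
    ∀ x ∈ cantorSet, ∃ y ∈ cantorSet, y ≠ x ∧ |y - x| ≤ (1/3)^n := by
  induction n with
  | zero =>
    intro x hx
    obtain ⟨h0, h1⟩ := cantorSet_subset_unitInterval hx
    by_cases h : x = 0
    · exact ⟨1, one_mem_cantorSet, by rw [h]; norm_num, by rw [h]; norm_num⟩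
    · exact ⟨0, zero_mem_cantorSet, fun h' => h h'.symm, by rw [abs_sub_comm, sub_zero, abs_of_nonneg h0]; simpa using h1⟩
  | succ n ih =>
    intro x hx
    rcases cantorSet_cases hx with h | h
    · obtain ⟨y', hy', hne, hd⟩ := ih (3*x) (cantorSet_three_mul hx h)
      refine ⟨y'/3, cantorSet_div_three hy', ?_, ?_⟩
      · intro he; apply hne; field_simp at he; linarith
      · have : y'/3 - x = (y' - 3*x)/3 := by ring
        rw [this, abs_div]
        rw [pow_succ]
        have : |(3:ℝ)| = 3 := by norm_num
        rw [this]
        rw [div_le_iff₀ (by norm_num : (0:ℝ) < 3)] at *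
        calc |y' - 3*x| ≤ (1/3)^n := hd
        _ = (1/3)^n * 3 / 3 := by ring
        _ ≤ _ := by rw [div_le_iff₀ (by norm_num : (0:ℝ) < 3)]; ring_nf; linarith [le_refl ((1/3:ℝ)^n)]
    · obtain ⟨y', hy', hne, hd⟩ := ih (3*x - 2) (cantorSet_three_mul_sub hx h)
      refine ⟨(2+y')/3, cantorSet_two_add_div_three hy', ?_, ?_⟩
      · intro he; apply hne; field_simp at he; linarith
      · have h2 : (2+y')/3 - x = (y' - (3*x - 2))/3 := by ring
        rw [h2, abs_div, pow_succ]
        have h3 : |(3:ℝ)| = 3 := by norm_num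
        rw [h3, div_le_iff₀ (by norm_num : (0:ℝ) < 3)]
        calc |y' - (3*x-2)| ≤ (1/3)^n := hd
        _ = (1/3)^n * (1/3) * 3 := by ring



lemma half_not_mem_preCantorSet (n : ℕ) : (1/2 : ℝ) ∉ preCantorSet (n+1) := by
  rintro (⟨y, hy, hxy⟩ | ⟨y, hy, hxy⟩) <;> obtain ⟨h0, h1⟩ := preCantorSet_subset_Icc n hy
  · have : y = 3/2 := by field_simp at hxy; linarith
    linarith [this ▸ h1]
  · have : y = -1/2 := by field_simp at hxy; linarith
    linarith [this ▸ h0]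

lemma preCantorSet_no_interval (n : ℕ) :
    ∀ x y : ℝ, (1/3 : ℝ)^n < y - x → ¬ (Set.Icc x y ⊆ preCantorSet n) := by
  induction n with
  | zero =>
    intro x y hxy hsub
    obtain ⟨hx0, hx1⟩ := hsub (Set.left_mem_Icc.mpr (by linarith))
    obtain ⟨hy0, hy1⟩ := hsub (Set.right_mem_Icc.mpr (by linarith))
    simp only [pow_zero] at hxy
    linarith
  | succ n ih =>
    intro x y hxy hsub
    have hpow : (0:ℝ) < (1/3)^n := by positivity
    have hxley : x ≤ y := by
      have : (0:ℝ) < (1/3)^(n+1) := by positivity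
      linarith
    by_cases hmid : x ≤ 1/2 ∧ 1/2 ≤ y
    · exact half_not_mem_preCantorSet n (hsub ⟨hmid.1, hmid.2⟩)
    · rw [not_and_or] at hmid
      have key : (∀ z ∈ Set.Icc x y, z ≤ 1/3) ∨ (∀ z ∈ Set.Icc x y, 2/3 ≤ z) := by
        rcases hmid with h | h
        · push_neg at h
          right; intro z ⟨hz1, hz2⟩
          rcases hsub ⟨hz1, hz2⟩ with ⟨w, hw, hzw⟩ | ⟨w, hw, hzw⟩ <;>
            obtain ⟨h0, h1⟩ := preCantorSet_subset_Icc n hw <;>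
            [change w / 3 = z at hzw; change (2 + w) / 3 = z at hzw]
          · exfalso; linarith
          · linarith
        · push_neg at h
          left; intro z ⟨hz1, hz2⟩
          rcases hsub ⟨hz1, hz2⟩ with ⟨w, hw, hzw⟩ | ⟨w, hw, hzw⟩ <;>
            obtain ⟨h0, h1⟩ := preCantorSet_subset_Icc n hw <;>
            [change w / 3 = z at hzw; change (2 + w) / 3 = z at hzw]
          · linarith
          · exfalso; linarith
      rcases key with h | h
      · apply ih (3*x) (3*y) (by rw [pow_succ] at hxy; linarith)
        intro z ⟨hz1, hz2⟩
        have hz : z/3 ∈ Set.Icc x y := ⟨by linarith, by linarith⟩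
        rcases hsub hz with ⟨w, hw, hzw⟩ | ⟨w, hw, hzw⟩
        · have : z = w := by field_simp at hzw; linarith
          rwa [this]
        · exfalso
          have := h _ hz
          obtain ⟨h0, h1⟩ := preCantorSet_subset_Icc n hw
          rw [← hzw] at this; linarith
      · apply ih (3*x - 2) (3*y - 2) (by rw [pow_succ] at hxy; linarith)
        intro z ⟨hz1, hz2⟩
        have hz : (z+2)/3 ∈ Set.Icc x y := ⟨by linarith, by linarith⟩
        rcases hsub hz with ⟨w, hw, hzw⟩ | ⟨w, hw, hzw⟩
        · exfalso
          have := h _ hz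
          obtain ⟨h0, h1⟩ := preCantorSet_subset_Icc n hw
          rw [← hzw] at this; linarith
        · have : z = w := by field_simp at hzw; linarith
          rwa [this]

lemma cantorSet_exists_gap {x y : ℝ} (hx : x ∈ cantorSet) (hy : y ∈ cantorSet) (hxy : x < y) :
    ∃ z ∉ cantorSet, x < z ∧ z < y := by
  obtain ⟨n, hn⟩ : ∃ n : ℕ, (1/3:ℝ)^n < y - x := by
    obtain ⟨n, hn⟩ := exists_pow_lt_of_lt_one (by linarith : (0:ℝ) < y - x) (by norm_num : (1/3:ℝ) < 1)
    exact ⟨n, hn⟩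
  have := preCantorSet_no_interval n x y hn
  rw [Set.not_subset] at this
  obtain ⟨z, hz, hznot⟩ := this
  have hzC : z ∉ cantorSet := fun h => hznot (Set.mem_iInter.mp h n)
  refine ⟨z, hzC, ?_, ?_⟩
  · rcases lt_or_eq_of_le hz.1 with h | h
    · exact h
    · exact absurd (h ▸ hx) hzC
  · rcases lt_or_eq_of_le hz.2 with h | h
    · exact h
    · exact absurd (h.symm ▸ hy) hzC

theorem isTotallyDisconnected_cantorSet : IsTotallyDisconnected cantorSet := by
  intro t hts hpre x hx y hy
  by_contra hne
  rcases lt_or_gt_of_ne hne with h | h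
  · obtain ⟨z, hz, hxz, hzy⟩ := cantorSet_exists_gap (hts hx) (hts hy) h
    exact hz (hts (hpre.Icc_subset hx hy ⟨le_of_lt hxz, le_of_lt hzy⟩))
  · obtain ⟨z, hz, hxz, hzy⟩ := cantorSet_exists_gap (hts hy) (hts hx) h
    exact hz (hts (hpre.Icc_subset hy hx ⟨le_of_lt hxz, le_of_lt hzy⟩))

theorem perfect_cantorSet : Perfect cantorSet := by
  refine ⟨isClosed_cantorSet, fun x hx => ?_⟩
  rw [accPt_iff_nhds]
  intro U hU
  obtain ⟨ε, hε, hball⟩ := Metric.mem_nhds_iff.mp hU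
  obtain ⟨n, hn⟩ := exists_pow_lt_of_lt_one hε (by norm_num : (1/3:ℝ) < 1)
  obtain ⟨y, hyC, hyne, hyd⟩ := cantorSet_perfect_aux n x hx
  exact ⟨y, ⟨hball (by rw [Metric.mem_ball, Real.dist_eq]; linarith), hyC⟩, hyne⟩


variable {X : Type*} [MetricSpace X] [CompactSpace X] [TotallyDisconnectedSpace X]

/-- metric formulation of perfectness of a space -/
def MPerfect (X : Type*) [MetricSpace X] : Prop :=
  ∀ x : X, ∀ ε > 0, ∃ y : X, y ≠ x ∧ dist y x < ε

/-- `P` is a partition of `S` into nonempty clopen pieces of diameter at most `ε`. -/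
def CPart (S : Set X) (ε : ℝ) (P : Finset (Set X)) : Prop :=
  (∀ p ∈ P, IsClopen p ∧ p.Nonempty ∧ diam p ≤ ε) ∧
    (P : Set (Set X)).PairwiseDisjoint id ∧ ⋃₀ ↑P = S

lemma all_isBounded (s : Set X) : Bornology.IsBounded s :=
  (isCompact_univ.isBounded).subset (Set.subset_univ s)

lemma exists_clopen_cover {S : Set X} (hS : IsClopen S) {ε : ℝ} (hε : 0 < ε) :
    ∃ t : Finset (Set X), (∀ u ∈ t, IsClopen u ∧ u ⊆ S ∧ diam u ≤ ε) ∧ S ⊆ ⋃₀ ↑t := by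
  classical
  have hV : ∀ x : X, ∃ V : Set X, IsClopen V ∧ V ⊆ ball x (ε/2) ∧ (x ∈ S → x ∈ V) := by
    intro x
    obtain ⟨V, hV, hxV, hVb⟩ := compact_exists_isClopen_in_isOpen (isOpen_ball (x := x) (ε := ε/2))
      (mem_ball_self (by linarith))
    exact ⟨V, hV, hVb, fun _ => hxV⟩
  choose V hVc hVb hVx using hV
  obtain ⟨t, ht⟩ := (hS.isClosed.isCompact).elim_finite_subcover V (fun x => (hVc x).isOpen)
    (fun x hx => Set.mem_iUnion.mpr ⟨x, hVx x hx⟩)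
  refine ⟨t.image (fun x => V x ∩ S), ?_, ?_⟩
  · intro u hu
    obtain ⟨x, hx, rfl⟩ := Finset.mem_image.mp hu
    refine ⟨(hVc x).inter hS, Set.inter_subset_right, ?_⟩
    calc diam (V x ∩ S) ≤ diam (ball x (ε/2)) :=
          diam_mono (Set.inter_subset_left.trans (hVb x)) isBounded_ball
    _ ≤ 2 * (ε/2) := diam_ball (by linarith)
    _ = ε := by ring
  · intro x hx
    obtain ⟨y, hy, hxy⟩ := Set.mem_iUnion₂.mp (ht hx)
    exact Set.mem_sUnion.mpr ⟨V y ∩ S, Finset.mem_coe.mpr (Finset.mem_image.mpr ⟨y, hy, rfl⟩),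
      hxy, hx⟩

lemma disjointify (t : Finset (Set X)) (ht : ∀ u ∈ t, IsClopen u) :
    ∃ P : Finset (Set X), (∀ p ∈ P, IsClopen p ∧ p.Nonempty ∧ ∃ u ∈ t, p ⊆ u) ∧
      (P : Set (Set X)).PairwiseDisjoint id ∧ ⋃₀ (P : Set (Set X)) = ⋃₀ (t : Set (Set X)) := by
  classical
  induction t using Finset.induction_on with
  | empty => exact ⟨∅, by simp, by simp, by simp⟩
  | @insert u t hut ih =>
    obtain ⟨P, hP, hPd, hPu⟩ := ih (fun v hv => ht v (Finset.mem_insert_of_mem hv))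
    have htcl : IsClopen (⋃₀ (t : Set (Set X))) := by
      rw [Set.sUnion_eq_biUnion]
      exact isClopen_biUnion_finset (fun v hv => ht v (Finset.mem_insert_of_mem hv))
    have hucl : IsClopen u := ht u (Finset.mem_insert_self u t)
    by_cases hw : (u \ ⋃₀ ↑t).Nonempty
    · refine ⟨insert (u \ ⋃₀ ↑t) P, ?_, ?_, ?_⟩
      · intro p hp
        rcases Finset.mem_insert.mp hp with rfl | hp
        · exact ⟨hucl.diff htcl, hw, u, Finset.mem_insert_self u t, Set.diff_subset⟩
        · obtain ⟨h1, h2, v, hv, h3⟩ := hP p hp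
          exact ⟨h1, h2, v, Finset.mem_insert_of_mem hv, h3⟩
      · rw [Finset.coe_insert]
        refine hPd.insert (fun p hp hne => ?_)
        obtain ⟨-, -, v, hv, hpv⟩ := hP p hp
        have : p ⊆ ⋃₀ ↑t := hpv.trans (Set.subset_sUnion_of_mem hv)
        exact Set.disjoint_sdiff_left.mono_right this
      · rw [Finset.coe_insert, Set.sUnion_insert, hPu, Finset.coe_insert, Set.sUnion_insert]
        rw [Set.diff_union_self]
    · refine ⟨P, ?_, hPd, ?_⟩
      · intro p hp
        obtain ⟨h1, h2, v, hv, h3⟩ := hP p hp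
        exact ⟨h1, h2, v, Finset.mem_insert_of_mem hv, h3⟩
      · rw [hPu, Finset.coe_insert, Set.sUnion_insert]
        rw [Set.not_nonempty_iff_eq_empty, Set.diff_eq_empty] at hw
        rw [Set.union_eq_self_of_subset_left hw]

lemma exists_cpart {S : Set X} (hS : IsClopen S) {ε : ℝ} (hε : 0 < ε) :
    ∃ P : Finset (Set X), CPart S ε P := by
  obtain ⟨t, ht, hcov⟩ := exists_clopen_cover hS hε
  obtain ⟨P, hP, hPd, hPu⟩ := disjointify t (fun u hu => (ht u hu).1)
  refine ⟨P, fun p hp => ?_, hPd, ?_⟩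
  · obtain ⟨h1, h2, u, hu, h3⟩ := hP p hp
    exact ⟨h1, h2, le_trans (diam_mono h3 (all_isBounded u)) (ht u hu).2.2⟩
  · rw [hPu]
    exact Set.Subset.antisymm (Set.sUnion_subset (fun u hu => (ht u hu).2.1)) hcov

lemma cpart_card_pos {S : Set X} {ε : ℝ} {P : Finset (Set X)} (h : CPart S ε P)
    (hne : S.Nonempty) : P.Nonempty := by
  obtain ⟨x, hx⟩ := hne
  rw [← h.2.2] at hx
  obtain ⟨p, hp, -⟩ := hx
  exact ⟨p, hp⟩

lemma cpart_split (hperf : MPerfect X) {S : Set X} {ε : ℝ} {P : Finset (Set X)}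
    (h : CPart S ε P) {p : Set X} (hp : p ∈ P) :
    ∃ P' : Finset (Set X), CPart S ε P' ∧ P'.card = P.card + 1 := by
  classical
  obtain ⟨hpc, hpne, hpd⟩ := h.1 p hp
  obtain ⟨x, hx⟩ := hpne
  obtain ⟨r, hr, hball⟩ := Metric.isOpen_iff.mp hpc.isOpen x hx
  obtain ⟨y, hyx, hyd⟩ := hperf x r hr
  have hy : y ∈ p := hball (by rwa [mem_ball])
  obtain ⟨U, hU, hxU, hyU⟩ := exists_isClopen_of_totally_separated (Ne.symm hyx)
  set p1 := p ∩ U with hp1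
  set p2 := p \ U with hp2
  have hp1ne : p1.Nonempty := ⟨x, hx, hxU⟩
  have hp2ne : p2.Nonempty := ⟨y, hy, hyU⟩
  have hp12 : p1 ≠ p2 := by
    intro he
    have : x ∈ p2 := he ▸ ⟨hx, hxU⟩
    exact this.2 hxU
  have hsub1 : p1 ⊆ p := Set.inter_subset_left
  have hsub2 : p2 ⊆ p := Set.diff_subset
  have hdisj : ∀ q ∈ P.erase p, Disjoint p q := by
    intro q hq
    exact h.2.1 hp (Finset.mem_of_mem_erase hq) (Ne.symm (Finset.ne_of_mem_erase hq))
  have hnotmem : ∀ w : Set X, w.Nonempty → w ⊆ p → w ∉ P.erase p := by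
    intro w hwne hwp hmem
    obtain ⟨z, hz⟩ := hwne
    exact Set.disjoint_left.mp (hdisj w hmem) (hwp hz) hz
  have hp2mem : p2 ∉ P.erase p := hnotmem p2 hp2ne hsub2
  have hp1mem : p1 ∉ insert p2 (P.erase p) := by
    intro hmem
    rcases Finset.mem_insert.mp hmem with he | hmem
    · exact hp12 he
    · exact hnotmem p1 hp1ne hsub1 hmem
  refine ⟨insert p1 (insert p2 (P.erase p)), ⟨?_, ?_, ?_⟩, ?_⟩
  · intro q hq
    rcases Finset.mem_insert.mp hq with rfl | hq
    · exact ⟨hpc.inter hU, hp1ne, le_trans (diam_mono hsub1 (all_isBounded p)) hpd⟩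
    rcases Finset.mem_insert.mp hq with rfl | hq
    · exact ⟨hpc.diff hU, hp2ne, le_trans (diam_mono hsub2 (all_isBounded p)) hpd⟩
    · exact h.1 q (Finset.mem_of_mem_erase hq)
  · rw [Finset.coe_insert, Finset.coe_insert]
    have herase : ((P.erase p : Finset (Set X)) : Set (Set X)).PairwiseDisjoint id :=
      h.2.1.subset (Finset.coe_subset.mpr (Finset.erase_subset p P))
    have h2 : (insert p2 ((P.erase p : Finset (Set X)) : Set (Set X))).PairwiseDisjoint id := by
      refine herase.insert (fun q hq _ => ?_)
      exact (hdisj q (Finset.mem_coe.mp hq)).mono_left hsub2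
    refine h2.insert (fun q hq _ => ?_)
    rcases Set.mem_insert_iff.mp hq with rfl | hq
    · exact Set.disjoint_sdiff_right.mono_left Set.inter_subset_right
    · exact (hdisj q (Finset.mem_coe.mp hq)).mono_left hsub1
  · rw [Finset.coe_insert, Finset.coe_insert, Set.sUnion_insert, Set.sUnion_insert]
    rw [← Set.union_assoc]
    have : p1 ∪ p2 = p := Set.inter_union_diff p U
    rw [this, ← Set.sUnion_insert, ← Finset.coe_insert, Finset.insert_erase hp, h.2.2]
  · rw [Finset.card_insert_of_notMem hp1mem, Finset.card_insert_of_notMem hp2mem,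
      Finset.card_erase_of_mem hp]
    have : 1 ≤ P.card := Finset.card_pos.mpr ⟨p, hp⟩
    omega

lemma cpart_exact (hperf : MPerfect X) {S : Set X} (hS : IsClopen S) (hne : S.Nonempty)
    {ε : ℝ} (hε : 0 < ε) :
    ∃ n₀ : ℕ, 0 < n₀ ∧ ∀ m ≥ n₀, ∃ P : Finset (Set X), CPart S ε P ∧ P.card = m := by
  obtain ⟨P, hP⟩ := exists_cpart hS hε
  refine ⟨P.card, Finset.card_pos.mpr (cpart_card_pos hP hne), ?_⟩
  intro m hm
  obtain ⟨k, rfl⟩ := Nat.exists_eq_add_of_le hm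
  clear hm
  induction k with
  | zero => exact ⟨P, hP, rfl⟩
  | succ k ih =>
    obtain ⟨Q, hQ, hQc⟩ := ih
    obtain ⟨q, hq⟩ := cpart_card_pos hQ hne
    obtain ⟨Q', hQ', hQ'c⟩ := cpart_split hperf hQ hq
    exact ⟨Q', hQ', by omega⟩

section Brouwer
variable {X Y : Type} [MetricSpace X] [CompactSpace X] [TotallyDisconnectedSpace X]
  [MetricSpace Y] [CompactSpace Y] [TotallyDisconnectedSpace Y]

lemma matched_cpart (hX : MPerfect X) (hY : MPerfect Y) {S : Set X} {T : Set Y}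
    (hS : IsClopen S) (hSne : S.Nonempty) (hT : IsClopen T) (hTne : T.Nonempty)
    {ε : ℝ} (hε : 0 < ε) :
    ∃ (P : Finset (Set X)) (Q : Finset (Set Y)), CPart S ε P ∧ CPart T ε Q ∧ P.card = Q.card := by
  obtain ⟨n₀, hn₀, hP⟩ := cpart_exact hX hS hSne hε
  obtain ⟨m₀, hm₀, hQ⟩ := cpart_exact hY hT hTne hε
  obtain ⟨P, hP1, hP2⟩ := hP (max n₀ m₀) (le_max_left _ _)
  obtain ⟨Q, hQ1, hQ2⟩ := hQ (max n₀ m₀) (le_max_right _ _)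
  exact ⟨P, Q, hP1, hQ1, by omega⟩

structure MP (X Y : Type) [MetricSpace X] [MetricSpace Y] where
  P : Finset (Set X)
  Q : Finset (Set Y)
  e : {p : Set X // p ∈ P} ≃ {q : Set Y // q ∈ Q}
  hP : ∀ p ∈ P, IsClopen p ∧ p.Nonempty
  hQ : ∀ q ∈ Q, IsClopen q ∧ q.Nonempty
  hPd : (P : Set (Set X)).PairwiseDisjoint id
  hQd : (Q : Set (Set Y)).PairwiseDisjoint id
  hPu : ⋃₀ (P : Set (Set X)) = Set.univ
  hQu : ⋃₀ (Q : Set (Set Y)) = Set.univ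

def Mesh (M : MP X Y) (ε : ℝ) : Prop :=
  (∀ p ∈ M.P, diam p ≤ ε) ∧ (∀ q ∈ M.Q, diam q ≤ ε)

def Refines (M M' : MP X Y) : Prop :=
  ∀ u : {p : Set X // p ∈ M'.P}, ∃ p : {p : Set X // p ∈ M.P},
    (u : Set X) ⊆ (p : Set X) ∧ ((M'.e u : Set Y)) ⊆ ((M.e p : Set Y))

lemma MP.mem_subset_of_mem_cpart {α : Type} [MetricSpace α] {S : Set α} {ε : ℝ}
    {P : Finset (Set α)} (h : CPart S ε P) {u : Set α} (hu : u ∈ P) : u ⊆ S := by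
  rw [← h.2.2]; exact Set.subset_sUnion_of_mem (Finset.mem_coe.mpr hu)

lemma step_exists (hX : MPerfect X) (hY : MPerfect Y) (M : MP X Y) {ε : ℝ} (hε : 0 < ε) :
    ∃ M' : MP X Y, Refines M M' ∧ Mesh M' ε := by
  classical
  have key : ∀ p : {p : Set X // p ∈ M.P}, ∃ PQ : Finset (Set X) × Finset (Set Y),
      CPart (p : Set X) ε PQ.1 ∧ CPart ((M.e p : Set Y)) ε PQ.2 ∧ PQ.1.card = PQ.2.card := by
    intro p
    obtain ⟨hc, hne⟩ := M.hP p p.2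
    obtain ⟨hc', hne'⟩ := M.hQ _ (M.e p).2
    obtain ⟨P, Q, h1, h2, h3⟩ := matched_cpart hX hY hc hne hc' hne' hε
    exact ⟨(P, Q), h1, h2, h3⟩
  choose F hF1 hF2 hF3 using key
  have eb : ∀ p : {p : Set X // p ∈ M.P},
      {u : Set X // u ∈ (F p).1} ≃ {v : Set Y // v ∈ (F p).2} := fun p =>
    (Finset.equivFin _).trans ((finCongr (hF3 p)).trans (Finset.equivFin _).symm)
  set P' : Finset (Set X) := M.P.attach.biUnion (fun p => (F p).1) with hP'def
  set Q' : Finset (Set Y) := M.P.attach.biUnion (fun p => (F p).2) with hQ'def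
  have memP' : ∀ u : Set X, u ∈ P' ↔ ∃ p, u ∈ (F p).1 := by
    intro u
    simp [hP'def, Finset.mem_biUnion, Finset.mem_attach]
  have memQ' : ∀ v : Set Y, v ∈ Q' ↔ ∃ p, v ∈ (F p).2 := by
    intro v
    simp [hQ'def, Finset.mem_biUnion, Finset.mem_attach]
  -- uniqueness of parents
  have uniqP : ∀ (p p' : {p : Set X // p ∈ M.P}) (u : Set X),
      u ∈ (F p).1 → u ∈ (F p').1 → p = p' := by
    intro p p' u hu hu'
    obtain ⟨-, hune, -⟩ := (hF1 p).1 u hu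
    have h1 : u ⊆ (p : Set X) := MP.mem_subset_of_mem_cpart (hF1 p) hu
    have h2 : u ⊆ (p' : Set X) := MP.mem_subset_of_mem_cpart (hF1 p') hu'
    obtain ⟨z, hz⟩ := hune
    by_contra hne
    have : ¬ ((p : Set X) = (p' : Set X)) := fun h => hne (Subtype.ext h)
    exact Set.disjoint_left.mp (M.hPd p.2 p'.2 this) (h1 hz) (h2 hz)
  have uniqQ : ∀ (p p' : {p : Set X // p ∈ M.P}) (v : Set Y),
      v ∈ (F p).2 → v ∈ (F p').2 → p = p' := by
    intro p p' v hv hv'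
    obtain ⟨-, hvne, -⟩ := (hF2 p).1 v hv
    have h1 : v ⊆ (M.e p : Set Y) := MP.mem_subset_of_mem_cpart (hF2 p) hv
    have h2 : v ⊆ (M.e p' : Set Y) := MP.mem_subset_of_mem_cpart (hF2 p') hv'
    obtain ⟨z, hz⟩ := hvne
    by_contra hne
    have hee : ¬ ((M.e p : Set Y) = (M.e p' : Set Y)) := by
      intro h
      exact hne (M.e.injective (Subtype.ext h))
    exact Set.disjoint_left.mp (M.hQd (M.e p).2 (M.e p').2 hee) (h1 hz) (h2 hz)
  have hpar : ∀ u : {u : Set X // u ∈ P'}, ∃ p, (u : Set X) ∈ (F p).1 :=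
    fun u => (memP' u).mp u.2
  choose par hparmem using hpar
  let e' : {u : Set X // u ∈ P'} → {v : Set Y // v ∈ Q'} := fun u =>
    ⟨((eb (par u)) ⟨u, hparmem u⟩ : Set Y), (memQ' _).mpr ⟨par u, ((eb (par u)) ⟨u, hparmem u⟩).2⟩⟩
  have coh : ∀ (u : {u : Set X // u ∈ P'}) (p : {p : Set X // p ∈ M.P})
      (hu : (u : Set X) ∈ (F p).1), (e' u : Set Y) = ((eb p) ⟨u, hu⟩ : Set Y) := by
    intro u p hu
    have hpp : par u = p := uniqP _ _ _ (hparmem u) hu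
    subst hpp
    rfl
  have e'inj : Function.Injective e' := by
    intro u1 u2 he
    have hv1 : (e' u1 : Set Y) = (e' u2 : Set Y) := by rw [he]
    rw [coh u1 (par u1) (hparmem u1), coh u2 (par u2) (hparmem u2)] at hv1
    have hp12 : par u1 = par u2 := by
      apply uniqQ (par u1) (par u2) _ ((eb (par u1)) ⟨u1, hparmem u1⟩).2
      rw [hv1]
      exact ((eb (par u2)) ⟨u2, hparmem u2⟩).2
    have h2' : (u2 : Set X) ∈ (F (par u1)).1 := by rw [hp12]; exact hparmem u2
    have heq : (eb (par u1)) ⟨u1, hparmem u1⟩ = (eb (par u1)) ⟨u2, h2'⟩ := by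
      apply Subtype.ext
      rw [hv1, ← coh u2 (par u2) (hparmem u2), coh u2 (par u1) h2']
    have hval := congrArg Subtype.val ((eb (par u1)).injective heq)
    exact Subtype.ext hval
  have e'surj : Function.Surjective e' := by
    intro v
    obtain ⟨p, hv⟩ := (memQ' v).mp v.2
    set u₀ := (eb p).symm ⟨v, hv⟩ with hu₀
    refine ⟨⟨u₀, (memP' _).mpr ⟨p, u₀.2⟩⟩, ?_⟩
    apply Subtype.ext
    rw [coh _ p u₀.2]
    have : (⟨(u₀ : Set X), u₀.2⟩ : {u : Set X // u ∈ (F p).1}) = u₀ := rfl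
    rw [this, hu₀, Equiv.apply_symm_apply]
  refine ⟨⟨P', Q', Equiv.ofBijective e' ⟨e'inj, e'surj⟩, ?_, ?_, ?_, ?_, ?_, ?_⟩, ?_, ?_, ?_⟩
  · intro u hu
    obtain ⟨p, hp⟩ := (memP' u).mp hu
    obtain ⟨h1, h2, h3⟩ := (hF1 p).1 u hp
    exact ⟨h1, h2⟩
  · intro v hv
    obtain ⟨p, hp⟩ := (memQ' v).mp hv
    obtain ⟨h1, h2, h3⟩ := (hF2 p).1 v hp
    exact ⟨h1, h2⟩
  · intro u1 hu1 u2 hu2 hne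
    obtain ⟨p1, hp1⟩ := (memP' u1).mp (Finset.mem_coe.mp hu1)
    obtain ⟨p2, hp2⟩ := (memP' u2).mp (Finset.mem_coe.mp hu2)
    by_cases hp : p1 = p2
    · subst hp
      exact (hF1 p1).2.1 (Finset.mem_coe.mpr hp1) (Finset.mem_coe.mpr hp2) hne
    · have hd : Disjoint (p1 : Set X) (p2 : Set X) := by
        apply M.hPd p1.2 p2.2
        exact fun h => hp (Subtype.ext h)
      exact hd.mono (MP.mem_subset_of_mem_cpart (hF1 p1) hp1)
        (MP.mem_subset_of_mem_cpart (hF1 p2) hp2)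
  · intro v1 hv1 v2 hv2 hne
    obtain ⟨p1, hp1⟩ := (memQ' v1).mp (Finset.mem_coe.mp hv1)
    obtain ⟨p2, hp2⟩ := (memQ' v2).mp (Finset.mem_coe.mp hv2)
    by_cases hp : p1 = p2
    · subst hp
      exact (hF2 p1).2.1 (Finset.mem_coe.mpr hp1) (Finset.mem_coe.mpr hp2) hne
    · have hd : Disjoint (M.e p1 : Set Y) (M.e p2 : Set Y) := by
        apply M.hQd (M.e p1).2 (M.e p2).2
        intro h
        exact hp (M.e.injective (Subtype.ext h))
      exact hd.mono (MP.mem_subset_of_mem_cpart (hF2 p1) hp1)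
        (MP.mem_subset_of_mem_cpart (hF2 p2) hp2)
  · apply Set.eq_univ_of_forall
    intro x
    have hx : x ∈ ⋃₀ (M.P : Set (Set X)) := by rw [M.hPu]; trivial
    obtain ⟨p, hp, hxp⟩ := hx
    have : x ∈ ⋃₀ ((F ⟨p, hp⟩).1 : Set (Set X)) := by rw [(hF1 ⟨p, hp⟩).2.2]; exact hxp
    obtain ⟨u, hu, hxu⟩ := this
    exact ⟨u, Finset.mem_coe.mpr ((memP' u).mpr ⟨⟨p, hp⟩, Finset.mem_coe.mp hu⟩), hxu⟩
  · apply Set.eq_univ_of_forall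
    intro y
    have hy : y ∈ ⋃₀ (M.Q : Set (Set Y)) := by rw [M.hQu]; trivial
    obtain ⟨q, hq, hyq⟩ := hy
    set p := M.e.symm ⟨q, hq⟩ with hpdef
    have hq' : (M.e p : Set Y) = q := by rw [hpdef, Equiv.apply_symm_apply]
    have : y ∈ ⋃₀ ((F p).2 : Set (Set Y)) := by rw [(hF2 p).2.2, hq']; exact hyq
    obtain ⟨v, hv, hyv⟩ := this
    exact ⟨v, Finset.mem_coe.mpr ((memQ' v).mpr ⟨p, Finset.mem_coe.mp hv⟩), hyv⟩
  · intro u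
    refine ⟨par u, MP.mem_subset_of_mem_cpart (hF1 (par u)) (hparmem u), ?_⟩
    have : (Equiv.ofBijective e' ⟨e'inj, e'surj⟩ u : Set Y) = (e' u : Set Y) := rfl
    rw [this, coh u (par u) (hparmem u)]
    exact MP.mem_subset_of_mem_cpart (hF2 (par u)) ((eb (par u)) ⟨u, hparmem u⟩).2
  · intro u hu
    obtain ⟨p, hp⟩ := (memP' u).mp hu
    exact ((hF1 p).1 u hp).2.2
  · intro v hv
    obtain ⟨p, hp⟩ := (memQ' v).mp hv
    exact ((hF2 p).1 v hp).2.2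


-- continuation: appended to d0.lean for testing
section Brouwer2

variable {X Y : Type} [MetricSpace X] [CompactSpace X] [TotallyDisconnectedSpace X]
  [MetricSpace Y] [CompactSpace Y] [TotallyDisconnectedSpace Y]

lemma all_isBounded' {Z : Type} [MetricSpace Z] [CompactSpace Z] (s : Set Z) :
    Bornology.IsBounded s :=
  (isCompact_univ.isBounded).subset (Set.subset_univ s)

noncomputable def baseMP (X Y : Type) [MetricSpace X] [MetricSpace Y] [Nonempty X] [Nonempty Y] : MP X Y where
  P := {Set.univ}
  Q := {Set.univ}
  e := Equiv.ofBijective (fun _ => ⟨Set.univ, Finset.mem_singleton_self _⟩)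
    ⟨fun a b _ => Subtype.ext (by
        rw [Finset.mem_singleton.mp a.2, Finset.mem_singleton.mp b.2]),
      fun v => ⟨⟨Set.univ, Finset.mem_singleton_self _⟩,
        Subtype.ext (Finset.mem_singleton.mp v.2).symm⟩⟩
  hP := fun p hp => by rw [Finset.mem_singleton.mp hp]; exact ⟨isClopen_univ, Set.univ_nonempty⟩
  hQ := fun q hq => by rw [Finset.mem_singleton.mp hq]; exact ⟨isClopen_univ, Set.univ_nonempty⟩
  hPd := by rw [Finset.coe_singleton]; exact Set.pairwiseDisjoint_singleton _ _
  hQd := by rw [Finset.coe_singleton]; exact Set.pairwiseDisjoint_singleton _ _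
  hPu := by rw [Finset.coe_singleton, Set.sUnion_singleton]
  hQu := by rw [Finset.coe_singleton, Set.sUnion_singleton]

variable [Nonempty X] [Nonempty Y]

noncomputable def tower (hX : MPerfect X) (hY : MPerfect Y) : ℕ → MP X Y
  | 0 => baseMP X Y
  | n+1 => (step_exists hX hY (tower hX hY n)
      (by positivity : (0:ℝ) < 1/((n:ℝ)+1))).choose

lemma tower_spec (hX : MPerfect X) (hY : MPerfect Y) (n : ℕ) :
    Refines (tower hX hY n) (tower hX hY (n+1)) ∧ Mesh (tower hX hY (n+1)) (1/((n:ℝ)+1)) :=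
  (step_exists hX hY (tower hX hY n) (by positivity : (0:ℝ) < 1/((n:ℝ)+1))).choose_spec

theorem mperfect_homeo (hX : MPerfect X) (hY : MPerfect Y) : Nonempty (X ≃ₜ Y) := by
  set f : ℕ → MP X Y := tower hX hY with hf
  have href : ∀ n, Refines (f n) (f (n+1)) := fun n => (tower_spec hX hY n).1
  have hmesh : ∀ n, Mesh (f (n+1)) (1/((n:ℝ)+1)) := fun n => (tower_spec hX hY n).2
  have uniq : ∀ (n : ℕ) (p q : {p : Set X // p ∈ (f n).P}) (x : X),
      x ∈ (p : Set X) → x ∈ (q : Set X) → p = q := by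
    intro n p q x hp hq
    by_contra h
    exact Set.disjoint_left.mp
      ((f n).hPd p.2 q.2 (fun he => h (Subtype.ext he))) hp hq
  have uniqQ : ∀ (n : ℕ) (p q : {q : Set Y // q ∈ (f n).Q}) (y : Y),
      y ∈ (p : Set Y) → y ∈ (q : Set Y) → p = q := by
    intro n p q y hp hq
    by_contra h
    exact Set.disjoint_left.mp
      ((f n).hQd p.2 q.2 (fun he => h (Subtype.ext he))) hp hq
  have hs : ∀ (n : ℕ) (x : X), ∃ p : {p : Set X // p ∈ (f n).P}, x ∈ (p : Set X) := by
    intro n x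
    have hx : x ∈ ⋃₀ ((f n).P : Set (Set X)) := by rw [(f n).hPu]; trivial
    obtain ⟨p, hp, hxp⟩ := hx
    exact ⟨⟨p, hp⟩, hxp⟩
  choose s hsmem using hs
  set B : ℕ → X → Set Y := fun n x => ((f n).e (s n x) : Set Y) with hB
  have hBclop : ∀ n x, IsClopen (B n x) := fun n x => ((f n).hQ _ ((f n).e (s n x)).2).1
  have hBne : ∀ n x, (B n x).Nonempty := fun n x => ((f n).hQ _ ((f n).e (s n x)).2).2
  have hBnest : ∀ n x, B (n+1) x ⊆ B n x := by
    intro n x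
    obtain ⟨p, h1, h2⟩ := href n (s (n+1) x)
    have hps : p = s n x := uniq n p (s n x) x (h1 (hsmem (n+1) x)) (hsmem n x)
    show ((f (n+1)).e (s (n+1) x) : Set Y) ⊆ ((f n).e (s n x) : Set Y)
    rw [← hps]
    exact h2
  have hgex : ∀ x : X, ∃ y : Y, y ∈ ⋂ n, B n x := by
    intro x
    have := IsCompact.nonempty_iInter_of_sequence_nonempty_isCompact_isClosed (B · x)
      (fun n => hBnest n x) (fun n => hBne n x)
      ((hBclop 0 x).isClosed.isCompact) (fun n => (hBclop n x).isClosed)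
    exact this
  choose g hg using hgex
  have hgmem : ∀ (n : ℕ) (x : X), g x ∈ B n x := fun n x => Set.mem_iInter.mp (hg x) n
  have hBd : ∀ (n : ℕ) (x : X), diam (B (n+1) x) ≤ 1/((n:ℝ)+1) := fun n x =>
    (hmesh n).2 _ ((f (n+1)).e (s (n+1) x)).2
  have hAd : ∀ (n : ℕ) (x : X), diam ((s (n+1) x : Set X)) ≤ 1/((n:ℝ)+1) := fun n x =>
    (hmesh n).1 _ (s (n+1) x).2
  have hloc : ∀ (n : ℕ) (x x' : X), x' ∈ (s n x : Set X) → s n x' = s n x :=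
    fun n x x' h => uniq n (s n x') (s n x) x' (hsmem n x') h
  have hgc : Continuous g := by
    rw [Metric.continuous_iff]
    intro x ε hε
    obtain ⟨n, hn⟩ := exists_nat_one_div_lt hε
    obtain ⟨δ, hδ, hball⟩ := Metric.isOpen_iff.mp
      (((f (n+1)).hP _ (s (n+1) x).2).1.isOpen) x (hsmem (n+1) x)
    refine ⟨δ, hδ, fun x' hx' => ?_⟩
    have hss : s (n+1) x' = s (n+1) x := hloc _ _ _ (hball hx')
    have h1 : g x' ∈ B (n+1) x := by
      have : B (n+1) x' = B (n+1) x := by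
        show ((f (n+1)).e (s (n+1) x') : Set Y) = ((f (n+1)).e (s (n+1) x) : Set Y)
        rw [hss]
      rw [← this]; exact hgmem (n+1) x'
    calc dist (g x') (g x) ≤ diam (B (n+1) x) :=
          dist_le_diam_of_mem (all_isBounded' _) h1 (hgmem (n+1) x)
    _ ≤ 1/((n:ℝ)+1) := hBd n x
    _ < ε := hn
  have hginj : Function.Injective g := by
    intro x x' hgg
    by_contra hne
    have hd : 0 < dist x x' := dist_pos.mpr hne
    obtain ⟨n, hn⟩ := exists_nat_one_div_lt hd
    have hsne : s (n+1) x ≠ s (n+1) x' := by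
      intro h
      have hx'mem : x' ∈ (s (n+1) x : Set X) := by rw [h]; exact hsmem (n+1) x'
      have : dist x x' ≤ diam ((s (n+1) x : Set X)) :=
        dist_le_diam_of_mem (all_isBounded' _) (hsmem (n+1) x) hx'mem
      linarith [hAd n x]
    have hQne : ((f (n+1)).e (s (n+1) x) : Set Y) ≠ ((f (n+1)).e (s (n+1) x') : Set Y) :=
      fun h => hsne ((f (n+1)).e.injective (Subtype.ext h))
    have hdisj := (f (n+1)).hQd ((f (n+1)).e (s (n+1) x)).2 ((f (n+1)).e (s (n+1) x')).2 hQne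
    exact Set.disjoint_left.mp hdisj (hgmem (n+1) x) (hgg ▸ hgmem (n+1) x')
  have hgsurj : Function.Surjective g := by
    intro y
    have ht : ∀ n : ℕ, ∃ q : {q : Set Y // q ∈ (f n).Q}, y ∈ (q : Set Y) := by
      intro n
      have hy : y ∈ ⋃₀ ((f n).Q : Set (Set Y)) := by rw [(f n).hQu]; trivial
      obtain ⟨q, hq, hyq⟩ := hy
      exact ⟨⟨q, hq⟩, hyq⟩
    choose t htmem using ht
    set A : ℕ → Set X := fun n => ((f n).e.symm (t n) : Set X) with hA
    have hAnest : ∀ n, A (n+1) ⊆ A n := by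
      intro n
      obtain ⟨p, h1, h2⟩ := href n ((f (n+1)).e.symm (t (n+1)))
      rw [Equiv.apply_symm_apply] at h2
      have hy' : y ∈ ((f n).e p : Set Y) := h2 (htmem (n+1))
      have het : (f n).e p = t n := uniqQ n _ _ y hy' (htmem n)
      have hp : p = (f n).e.symm (t n) := by rw [← het, Equiv.symm_apply_apply]
      show ((f (n+1)).e.symm (t (n+1)) : Set X) ⊆ ((f n).e.symm (t n) : Set X)
      rw [← hp]
      exact h1
    have hAcl : ∀ n, IsClosed (A n) := fun n =>
      (((f n).hP _ ((f n).e.symm (t n)).2).1).isClosed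
    have hAne : ∀ n, (A n).Nonempty := fun n => ((f n).hP _ ((f n).e.symm (t n)).2).2
    obtain ⟨x, hx⟩ := IsCompact.nonempty_iInter_of_sequence_nonempty_isCompact_isClosed A
      hAnest hAne ((hAcl 0).isCompact) hAcl
    have hsx : ∀ n, s n x = (f n).e.symm (t n) :=
      fun n => uniq n _ _ x (hsmem n x) (Set.mem_iInter.mp hx n)
    have hyB : ∀ n, y ∈ B n x := by
      intro n
      have : B n x = (t n : Set Y) := by
        show ((f n).e (s n x) : Set Y) = (t n : Set Y)
        rw [hsx n, Equiv.apply_symm_apply]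
      rw [this]; exact htmem n
    refine ⟨x, ?_⟩
    have hdist : ∀ n : ℕ, dist (g x) y ≤ 1/((n:ℝ)+1) := fun n =>
      (dist_le_diam_of_mem (all_isBounded' _) (hgmem (n+1) x) (hyB (n+1))).trans (hBd n x)
    have h0 : dist (g x) y ≤ 0 :=
      ge_of_tendsto' tendsto_one_div_add_atTop_nhds_zero_nat hdist
    exact eq_of_dist_eq_zero (le_antisymm h0 dist_nonneg)
  exact ⟨Continuous.homeoOfEquivCompactToT2 (f := Equiv.ofBijective g ⟨hginj, hgsurj⟩) hgc⟩

end Brouwer2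

open Topology

section Transfer
variable {M : Type} [MetricSpace M]

lemma compactSpace_subtype {A : Set M} (h : IsCompact A) : CompactSpace ↥A :=
  isCompact_iff_compactSpace.mp h

lemma tds_subtype {A : Set M} (h : IsTotallyDisconnected A) : TotallyDisconnectedSpace ↥A := by
  constructor
  intro t _ ht
  have himg : IsPreconnected (Subtype.val '' t) := ht.image _ continuous_subtype_val.continuousOn
  have hsub : Subtype.val '' t ⊆ A := by rintro y ⟨x, hx, rfl⟩; exact x.2
  have hss := h _ hsub himg
  intro a ha b hb
  exact Subtype.val_injective (hss (Set.mem_image_of_mem _ ha) (Set.mem_image_of_mem _ hb))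

lemma mperfect_of_perfect {A : Set M} (h : Perfect A) : MPerfect ↥A := by
  intro x ε hε
  have hacc := h.acc x.1 x.2
  rw [accPt_iff_nhds] at hacc
  obtain ⟨y, ⟨hyb, hyA⟩, hyne⟩ := hacc (Metric.ball x.1 ε) (Metric.ball_mem_nhds _ hε)
  exact ⟨⟨y, hyA⟩, fun he => hyne (congrArg Subtype.val he),
    by rw [Subtype.dist_eq]; exact Metric.mem_ball.mp hyb⟩

lemma mperfect_open {Z : Type} [MetricSpace Z] (h : MPerfect Z) {S : Set Z} (hS : IsOpen S) :
    MPerfect ↥S := by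
  intro x ε hε
  obtain ⟨r, hr, hball⟩ := Metric.isOpen_iff.mp hS x.1 x.2
  obtain ⟨y, hyne, hyd⟩ := h x.1 (min ε r) (lt_min hε hr)
  have hyS : y ∈ S := hball (Metric.mem_ball.mpr (lt_of_lt_of_le hyd (min_le_right _ _)))
  exact ⟨⟨y, hyS⟩, fun he => hyne (congrArg Subtype.val he),
    by rw [Subtype.dist_eq]; exact lt_of_lt_of_le hyd (min_le_left _ _)⟩

variable {Z : Type} [MetricSpace Z] [CompactSpace Z]

lemma perfect_range (hZ : MPerfect Z) {e : Z → M} (he : Continuous e)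
    (hinj : Function.Injective e) : Perfect (Set.range e) := by
  constructor
  · exact (isCompact_range he).isClosed
  · rintro y ⟨a, rfl⟩
    rw [accPt_iff_nhds]
    intro U hU
    have hU' : e ⁻¹' U ∈ 𝓝 a := he.continuousAt.preimage_mem_nhds hU
    obtain ⟨r, hr, hball⟩ := Metric.mem_nhds_iff.mp hU'
    obtain ⟨b, hbne, hbd⟩ := hZ a r hr
    exact ⟨e b, ⟨hball (Metric.mem_ball.mpr hbd), Set.mem_range_self b⟩,
      fun h => hbne (hinj h)⟩

lemma td_range [TotallyDisconnectedSpace Z] {e : Z → M} (he : Topology.IsEmbedding e) :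
    IsTotallyDisconnected (Set.range e) := by
  intro t hts htp
  have himg : e '' (e ⁻¹' t) = t := Set.image_preimage_eq_of_subset hts
  have hpre : IsPreconnected (e ⁻¹' t) :=
    he.isInducing.isPreconnected_image.mp (by rw [himg]; exact htp)
  have hss := isTotallyDisconnected_of_totallyDisconnectedSpace (e ⁻¹' t) _ subset_rfl hpre
  rw [← himg]
  exact hss.image _

end Transfer

section Key

variable {Z M : Type} [MetricSpace Z] [CompactSpace Z] [TotallyDisconnectedSpace Z] [Nonempty Z]
  [MetricSpace M]

lemma key_approx (hZ : MPerfect Z) (f : C(Z, M)) (hf : Topology.IsEmbedding ⇑f)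
    {ε : ℝ} (hε : 0 < ε) :
    ∃ δ > 0, ∀ K : Set M, K.Nonempty → IsCompact K → Perfect K → IsTotallyDisconnected K →
      hausdorffDist (Set.range ⇑f) K < δ →
      ∃ g : C(Z, M), Topology.IsEmbedding ⇑g ∧ Set.range ⇑g = K ∧ dist f g < ε := by
  classical
  obtain ⟨d, hd, hdc⟩ := Metric.uniformContinuous_iff.mp
    (CompactSpace.uniformContinuous_of_continuous f.continuous) (ε/8) (by linarith)
  obtain ⟨P, hP⟩ := exists_cpart (X := Z) isClopen_univ (show (0:ℝ) < d/2 by linarith)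
  have hcompim : ∀ p ∈ P, IsCompact (⇑f '' p) := fun p hp =>
    ((hP.1 p hp).1.isClosed.isCompact).image f.continuous
  have himage_diam : ∀ p ∈ P, diam (⇑f '' p) ≤ ε/8 := by
    intro p hp
    apply diam_le_of_forall_dist_le (by linarith)
    rintro y1 ⟨a, ha, rfl⟩ y2 ⟨b, hb, rfl⟩
    have hab : dist a b < d := by
      have h1 := dist_le_diam_of_mem (all_isBounded' p) ha hb
      have h2 := (hP.1 p hp).2.2
      linarith
    exact le_of_lt (hdc hab)
  have hpairs : ∀ pq : Set Z × Set Z, ∃ η : ℝ, 0 < η ∧ (pq.1 ∈ P → pq.2 ∈ P → pq.1 ≠ pq.2 →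
      Disjoint (thickening η (⇑f '' pq.1)) (thickening η (⇑f '' pq.2))) := by
    intro pq
    by_cases hc : pq.1 ∈ P ∧ pq.2 ∈ P ∧ pq.1 ≠ pq.2
    · obtain ⟨h1, h2, hne⟩ := hc
      have hdisj : Disjoint pq.1 pq.2 :=
        hP.2.1 (Finset.mem_coe.mpr h1) (Finset.mem_coe.mpr h2) hne
      have hdisjim : Disjoint (⇑f '' pq.1) (⇑f '' pq.2) := by
        rw [Set.disjoint_left]
        rintro y ⟨a, ha, rfl⟩ ⟨b, hb, hba⟩
        exact Set.disjoint_left.mp hdisj ha (hf.injective hba ▸ hb)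
      obtain ⟨η, hη, hdth⟩ := hdisjim.exists_thickenings (hcompim _ h1) (hcompim _ h2).isClosed
      exact ⟨η, hη, fun _ _ _ => hdth⟩
    · exact ⟨1, one_pos, fun h1 h2 hne => absurd ⟨h1, h2, hne⟩ hc⟩
  choose η hηpos hηdisj using hpairs
  set S : Finset ℝ := insert 1 ((P ×ˢ P).image η) with hSdef
  have hSne : S.Nonempty := ⟨1, Finset.mem_insert_self _ _⟩
  set η₀ := S.min' hSne with hη₀
  have hη₀pos : 0 < η₀ := by
    rcases Finset.mem_insert.mp (S.min'_mem hSne) with h | h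
    · rw [hη₀, h]; exact one_pos
    · obtain ⟨pq, _, hpq⟩ := Finset.mem_image.mp h
      rw [hη₀, ← hpq]
      exact hηpos pq
  have hη₀le : ∀ pq ∈ P ×ˢ P, η₀ ≤ η pq := fun pq hpq =>
    S.min'_le _ (Finset.mem_insert_of_mem (Finset.mem_image_of_mem η hpq))
  set δ := min η₀ (ε/4) with hδdef
  have hδpos : 0 < δ := lt_min hη₀pos (by linarith)
  have hδ4 : δ ≤ ε/4 := min_le_right _ _
  refine ⟨δ, hδpos, ?_⟩
  intro K hKne hKcomp hKperf hKtd hKdist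
  have hfin : EMetric.hausdorffEdist (Set.range ⇑f) K ≠ ⊤ :=
    hausdorffEdist_ne_top_of_nonempty_of_bounded (Set.range_nonempty _) hKne
      (isCompact_range f.continuous).isBounded hKcomp.isBounded
  have hcover : ∀ y ∈ K, ∃ p ∈ P, y ∈ thickening δ (⇑f '' p) := by
    intro y hy
    obtain ⟨a, ⟨x, rfl⟩, hya⟩ := exists_dist_lt_of_hausdorffDist_lt' hy hKdist hfin
    have hx : x ∈ ⋃₀ (P : Set (Set Z)) := by rw [hP.2.2]; trivial
    obtain ⟨p, hp, hxp⟩ := hx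
    exact ⟨p, Finset.mem_coe.mp hp,
      Metric.mem_thickening_iff.mpr ⟨f x, Set.mem_image_of_mem _ hxp, by rwa [dist_comm] at hya⟩⟩
  have hKpne : ∀ p ∈ P, ∃ y ∈ K, y ∈ thickening δ (⇑f '' p) := by
    intro p hp
    obtain ⟨x, hx⟩ := (hP.1 p hp).2.1
    obtain ⟨y, hyK, hxy⟩ := exists_dist_lt_of_hausdorffDist_lt (Set.mem_range_self x) hKdist hfin
    exact ⟨y, hyK, Metric.mem_thickening_iff.mpr
      ⟨f x, Set.mem_image_of_mem _ hx, by rwa [dist_comm] at hxy⟩⟩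
  have hKdisj : ∀ p ∈ P, ∀ q ∈ P, p ≠ q →
      Disjoint (thickening δ (⇑f '' p)) (thickening δ (⇑f '' q)) := by
    intro p hp q hq hne
    have hth := hηdisj (p, q) hp hq hne
    have hle : δ ≤ η (p, q) :=
      le_trans (min_le_left _ _) (hη₀le (p, q) (Finset.mem_product.mpr ⟨hp, hq⟩))
    exact hth.mono (thickening_mono hle _) (thickening_mono hle _)
  haveI hKcs : CompactSpace ↥K := compactSpace_subtype hKcomp
  haveI hKtds : TotallyDisconnectedSpace ↥K := tds_subtype hKtd
  haveI hKnon : Nonempty ↥K := hKne.to_subtype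
  have hKmp : MPerfect ↥K := mperfect_of_perfect hKperf
  set Kp : Set Z → Set ↥K := fun p => Subtype.val ⁻¹' (thickening δ (⇑f '' p)) with hKpdef
  have hKpopen : ∀ p, IsOpen (Kp p) := fun p =>
    isOpen_thickening.preimage continuous_subtype_val
  have hKpcover : ∀ z : ↥K, ∃ p ∈ P, z ∈ Kp p := by
    intro z
    obtain ⟨p, hp, hz⟩ := hcover z.1 z.2
    exact ⟨p, hp, hz⟩
  have hKpdisj : ∀ p ∈ P, ∀ q ∈ P, p ≠ q → Disjoint (Kp p) (Kp q) := fun p hp q hq hne =>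
    (hKdisj p hp q hq hne).preimage _
  have hKpclosed : ∀ p ∈ P, IsClosed (Kp p) := by
    intro p hp
    rw [← isOpen_compl_iff]
    have hcompl : (Kp p)ᶜ = ⋃ q ∈ P.erase p, Kp q := by
      ext z
      constructor
      · intro hz
        obtain ⟨q, hq, hzq⟩ := hKpcover z
        have hqp : q ≠ p := fun h => hz (h ▸ hzq)
        exact Set.mem_biUnion (Finset.mem_erase.mpr ⟨hqp, hq⟩) hzq
      · intro hz hzp
        obtain ⟨q, hq, hzq⟩ := Set.mem_iUnion₂.mp hz
        exact Set.disjoint_left.mp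
          (hKpdisj q (Finset.mem_of_mem_erase hq) p hp (Finset.ne_of_mem_erase hq)) hzq hzp
    rw [hcompl]
    exact isOpen_biUnion (fun q _ => hKpopen q)
  have hKpnon : ∀ p ∈ P, (Kp p).Nonempty := by
    intro p hp
    obtain ⟨y, hyK, hyth⟩ := hKpne p hp
    exact ⟨⟨y, hyK⟩, hyth⟩
  have hhomeo : ∀ p : {p : Set Z // p ∈ P}, Nonempty (↥(p : Set Z) ≃ₜ ↥(Kp p)) := by
    intro p
    haveI : CompactSpace ↥(p : Set Z) :=
      isCompact_iff_compactSpace.mp ((hP.1 p p.2).1.isClosed.isCompact)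
    haveI : Nonempty ↥(p : Set Z) := (hP.1 p p.2).2.1.to_subtype
    haveI : CompactSpace ↥(Kp p) := isCompact_iff_compactSpace.mp (hKpclosed p p.2).isCompact
    haveI : Nonempty ↥(Kp p) := (hKpnon p p.2).to_subtype
    exact mperfect_homeo (mperfect_open hZ (hP.1 p p.2).1.isOpen)
      (mperfect_open hKmp (hKpopen p))
  have h : ∀ p : {p : Set Z // p ∈ P}, (↥(p : Set Z) ≃ₜ ↥(Kp p)) :=
    fun p => Classical.choice (hhomeo p)
  have hparex : ∀ x : Z, ∃ p : {p : Set Z // p ∈ P}, x ∈ (p : Set Z) := by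
    intro x
    have hx : x ∈ ⋃₀ (P : Set (Set Z)) := by rw [hP.2.2]; trivial
    obtain ⟨p, hp, hxp⟩ := hx
    exact ⟨⟨p, hp⟩, hxp⟩
  choose par hparmem using hparex
  have uniqP : ∀ (p : {p : Set Z // p ∈ P}) (x : Z), x ∈ (p : Set Z) → par x = p := by
    intro p x hx
    by_contra hne
    have hne' : ((par x : Set Z)) ≠ (p : Set Z) := fun he => hne (Subtype.ext he)
    exact Set.disjoint_left.mp (hP.2.1 (par x).2 p.2 hne') (hparmem x) hx
  set g₀ : Z → M := fun x => ((h (par x)) ⟨x, hparmem x⟩).1.1 with hg₀def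
  have coh : ∀ (x : Z) (p : {p : Set Z // p ∈ P}) (hx : x ∈ (p : Set Z)),
      g₀ x = ((h p) ⟨x, hx⟩).1.1 := by
    intro x p hx
    have hpp : par x = p := uniqP p x hx
    subst hpp
    rfl
  have hmemK : ∀ x, g₀ x ∈ K := fun x => ((h (par x)) ⟨x, hparmem x⟩).1.2
  have hmemTh : ∀ (x : Z) (p : {p : Set Z // p ∈ P}) (hx : x ∈ (p : Set Z)),
      g₀ x ∈ thickening δ (⇑f '' (p : Set Z)) := by
    intro x p hx
    rw [coh x p hx]
    exact ((h p) ⟨x, hx⟩).2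
  have hg₀c : Continuous g₀ := by
    rw [continuous_iff_continuousAt]
    intro x
    apply ContinuousOn.continuousAt (s := ((par x : Set Z)))
    · rw [continuousOn_iff_continuous_restrict]
      have hrestr : Set.domRestrict ((par x : Set Z)) g₀ =
          fun z : ↥((par x : Set Z)) => ((h (par x)) z).1.1 := by
        funext z
        rw [Set.restrict_apply, coh z.1 (par x) z.2]
      rw [hrestr]
      exact continuous_subtype_val.comp
        (continuous_subtype_val.comp (h (par x)).continuous)
    · exact ((hP.1 _ (par x).2).1.isOpen).mem_nhds (hparmem x)
  have hg₀i : Function.Injective g₀ := by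
    intro x x' hxx
    by_cases hpp : par x = par x'
    · have hx' : x' ∈ ((par x : Set Z)) := by rw [hpp]; exact hparmem x'
      have e2 : g₀ x' = ((h (par x)) ⟨x', hx'⟩).1.1 := coh x' (par x) hx'
      have heq : ((h (par x)) ⟨x, hparmem x⟩) = ((h (par x)) ⟨x', hx'⟩) := by
        apply Subtype.ext; apply Subtype.ext
        rw [← e2, ← hxx]
      exact congrArg Subtype.val ((h (par x)).injective heq)
    · exfalso
      have h1 := hmemTh x (par x) (hparmem x)
      have h2 := hmemTh x' (par x') (hparmem x')
      rw [hxx] at h1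
      have hne : ((par x : Set Z)) ≠ ((par x' : Set Z)) := fun he => hpp (Subtype.ext he)
      exact Set.disjoint_left.mp (hKdisj _ (par x).2 _ (par x').2 hne) h1 h2
  have hg₀r : Set.range g₀ = K := by
    apply Set.Subset.antisymm
    · rintro y ⟨x, rfl⟩
      exact hmemK x
    · intro y hy
      obtain ⟨p, hp, hyth⟩ := hcover y hy
      set z : ↥(Kp p) := ⟨⟨y, hy⟩, hyth⟩ with hzdef
      set w := (h ⟨p, hp⟩).symm z with hwdef
      refine ⟨w.1, ?_⟩
      rw [coh w.1 ⟨p, hp⟩ w.2]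
      have hww : (⟨w.1, w.2⟩ : ↥((⟨p, hp⟩ : {p : Set Z // p ∈ P}) : Set Z)) = w := rfl
      rw [hww, hwdef, Homeomorph.apply_symm_apply]
  have hg₀e : Topology.IsEmbedding g₀ := (hg₀c.isClosedEmbedding hg₀i).isEmbedding
  refine ⟨⟨g₀, hg₀c⟩, hg₀e, hg₀r, ?_⟩
  rw [ContinuousMap.dist_lt_iff hε]
  intro x
  obtain ⟨a, ⟨x₀, hx₀, rfl⟩, hda⟩ :=
    Metric.mem_thickening_iff.mp (hmemTh x (par x) (hparmem x))
  have h1 : dist (f x) (f x₀) ≤ ε/8 := by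
    have hmem := dist_le_diam_of_mem (hcompim _ (par x).2).isBounded
      (Set.mem_image_of_mem f (hparmem x)) (Set.mem_image_of_mem f hx₀)
    linarith [himage_diam _ (par x).2]
  have h2 : dist (f x₀) (g₀ x) < δ := by rwa [dist_comm]
  calc dist (f x) ((⟨g₀, hg₀c⟩ : C(Z, M)) x) = dist (f x) (g₀ x) := rfl
  _ ≤ dist (f x) (f x₀) + dist (f x₀) (g₀ x) := dist_triangle _ _ _
  _ < ε/8 + δ := by linarith
  _ ≤ ε/8 + ε/4 := by linarith
  _ < ε := by linarith

end Key

section Final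

noncomputable instance : CompactSpace ↥cantorSet :=
  isCompact_iff_compactSpace.mp isCompact_cantorSet

instance : TotallyDisconnectedSpace ↥cantorSet := tds_subtype isTotallyDisconnected_cantorSet
instance : Nonempty ↥cantorSet := ⟨⟨0, zero_mem_cantorSet⟩⟩

lemma mperfect_cantorSp : MPerfect ↥cantorSet := mperfect_of_perfect perfect_cantorSet

/-- A Cantor set in ℝ^N: a non-empty compact perfect totally disconnected subset
(equivalently, a subset homeomorphic to the middle-thirds Cantor set). -/
def IsCantorSet {N : ℕ} (A : Set (EuclideanSpace ℝ (Fin N))) : Prop :=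
  A.Nonempty ∧ IsCompact A ∧ Perfect A ∧ IsTotallyDisconnected A

/-- The evaluation map `ℰ : Emb(𝒞, ℝ^N) → 𝒞(ℝ^N)`, `f ↦ f(𝒞)` (where `𝒞` is the
middle-thirds Cantor set, `Emb` carries the sup metric topology and `𝒞(ℝ^N)` the
Hausdorff metric topology) is a well-defined continuous open surjection. -/
theorem stmt_9 (N : ℕ) (hN : 1 ≤ N) :
    ∃ E : {f : C(↥cantorSet, EuclideanSpace ℝ (Fin N)) // Topology.IsEmbedding ⇑f} →
        {K : TopologicalSpace.NonemptyCompacts (EuclideanSpace ℝ (Fin N)) //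
          IsCantorSet (K : Set (EuclideanSpace ℝ (Fin N)))},
      (∀ f, ((E f : TopologicalSpace.NonemptyCompacts (EuclideanSpace ℝ (Fin N))) :
          Set (EuclideanSpace ℝ (Fin N))) = Set.range ⇑f.1) ∧
      Continuous E ∧ IsOpenMap E ∧ Function.Surjective E := by
  classical
  set M := EuclideanSpace ℝ (Fin N) with hM
  have hwd : ∀ f : {f : C(↥cantorSet, M) // Topology.IsEmbedding ⇑f},
      IsCantorSet (Set.range ⇑f.1) := fun f =>
    ⟨Set.range_nonempty _, isCompact_range f.1.continuous,
      perfect_range mperfect_cantorSp f.1.continuous f.2.injective, td_range f.2⟩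
  set E : {f : C(↥cantorSet, M) // Topology.IsEmbedding ⇑f} →
      {K : TopologicalSpace.NonemptyCompacts M // IsCantorSet (K : Set M)} := fun f =>
    ⟨⟨⟨Set.range ⇑f.1, isCompact_range f.1.continuous⟩, Set.range_nonempty _⟩, hwd f⟩ with hE
  have hEcoe : ∀ f, ((E f : TopologicalSpace.NonemptyCompacts M) : Set M) = Set.range ⇑f.1 :=
    fun f => rfl
  have hdeq : ∀ f g : {f : C(↥cantorSet, M) // Topology.IsEmbedding ⇑f},
      dist (E f) (E g) = hausdorffDist (Set.range ⇑f.1) (Set.range ⇑g.1) := fun f g => rfl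
  have hlip : ∀ f g : {f : C(↥cantorSet, M) // Topology.IsEmbedding ⇑f},
      dist (E f) (E g) ≤ dist f g := by
    intro f g
    rw [hdeq]
    apply hausdorffDist_le_of_mem_dist dist_nonneg
    · rintro x ⟨a, rfl⟩
      exact ⟨g.1 a, Set.mem_range_self a, ContinuousMap.dist_apply_le_dist a⟩
    · rintro x ⟨a, rfl⟩
      refine ⟨f.1 a, Set.mem_range_self a, ?_⟩
      rw [dist_comm]
      exact ContinuousMap.dist_apply_le_dist a
  refine ⟨E, hEcoe, ?_, ?_, ?_⟩
  · rw [Metric.continuous_iff]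
    intro f ε hε
    exact ⟨ε, hε, fun g hg => lt_of_le_of_lt (hlip g f) hg⟩
  · intro U hU
    rw [Metric.isOpen_iff]
    rintro _ ⟨f, hfU, rfl⟩
    obtain ⟨ε, hε, hball⟩ := Metric.isOpen_iff.mp hU f hfU
    obtain ⟨δ, hδ, hkey⟩ := key_approx mperfect_cantorSp f.1 f.2 hε
    refine ⟨δ, hδ, ?_⟩
    intro K hK
    have hKc := K.2
    have hdist : hausdorffDist (Set.range ⇑f.1) ((K.1 : Set M)) < δ := by
      rw [Metric.mem_ball] at hK
      have hrw : dist K (E f) =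
          hausdorffDist ((K.1 : Set M)) (Set.range ⇑f.1) := rfl
      rw [hrw, hausdorffDist_comm] at hK
      exact hK
    obtain ⟨g, hge, hgr, hgd⟩ := hkey (K.1 : Set M) hKc.1 hKc.2.1 hKc.2.2.1 hKc.2.2.2 hdist
    refine ⟨⟨g, hge⟩, hball ?_, ?_⟩
    · rw [Metric.mem_ball]
      have hrw : dist (⟨g, hge⟩ : {f : C(↥cantorSet, M) // Topology.IsEmbedding ⇑f}) f
          = dist g f.1 := rfl
      rw [hrw, dist_comm]
      exact hgd
    · apply Subtype.ext
      apply TopologicalSpace.NonemptyCompacts.ext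
      exact hgr
  · intro K
    have hKc := K.2
    haveI : CompactSpace ↥(K.1 : Set M) := compactSpace_subtype hKc.2.1
    haveI : TotallyDisconnectedSpace ↥(K.1 : Set M) := tds_subtype hKc.2.2.2
    haveI : Nonempty ↥(K.1 : Set M) := hKc.1.to_subtype
    obtain ⟨e⟩ := mperfect_homeo (X := ↥cantorSet) (Y := ↥(K.1 : Set M))
      mperfect_cantorSp (mperfect_of_perfect hKc.2.2.1)
    set f : C(↥cantorSet, M) :=
      ⟨fun x => (e x).1, continuous_subtype_val.comp e.continuous⟩ with hfdef
    have hfe : Topology.IsEmbedding ⇑f := Topology.IsEmbedding.subtypeVal.comp e.isEmbedding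
    refine ⟨⟨f, hfe⟩, ?_⟩
    apply Subtype.ext
    apply TopologicalSpace.NonemptyCompacts.ext
    show Set.range ⇑f = (K.1 : Set M)
    have hcomp : Set.range ⇑f = Subtype.val '' Set.range ⇑e := by
      rw [← Set.range_comp]
      rfl
    rw [hcomp, e.surjective.range_eq, Set.image_univ, Subtype.range_coe]

end Final
end Brouwer
end

section
/- For N ≥ 1 and each k ∈ ℕ, the set ℐ_k of all Cantor sets X ⊆ ℝ^N for which there exist a non-zero proper linear subspace L ⊆ ℝ^N and a point x ∈ X such that |p_L(X)| > 1 and d(p_L x, p_L(X) \ {p_L x}) ≥ 1/k, is closed in 𝒞(ℝ^N). -/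
/-- The space `𝒞(ℝ^N)` of Cantor sets in ℝ^N, topologized via the Hausdorff metric
(as a subspace of the space of non-empty compact subsets). -/
abbrev CantorSets (N : ℕ) :=
  {K : TopologicalSpace.NonemptyCompacts (EuclideanSpace ℝ (Fin N)) //
    IsCantorSet (K : Set (EuclideanSpace ℝ (Fin N)))}
set_option maxHeartbeats 1000000

open Metric Filter Topology TopologicalSpace Set

lemma aux_track {α : Type*} [MetricSpace α] (K : ℕ → NonemptyCompacts α) (K₀ : NonemptyCompacts α)
    (hd : Tendsto (fun n => dist (K n) K₀) atTop (𝓝 0)) (a : ℕ → α)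
    (ha : ∀ n, a n ∈ (K n : Set α)) :
    ∃ z : ℕ → α, (∀ n, z n ∈ (K₀ : Set α)) ∧
      Tendsto (fun n => dist (a n) (z n)) atTop (𝓝 0) := by
  have h1 : ∀ n, ∃ z ∈ (K₀ : Set α), infDist (a n) (K₀ : Set α) = dist (a n) z :=
    fun n => K₀.isCompact.exists_infDist_eq_dist K₀.nonempty (a n)
  choose z hz hz2 using h1
  refine ⟨z, hz, ?_⟩
  have hb : ∀ n, dist (a n) (z n) ≤ dist (K n) K₀ := by
    intro n
    rw [← hz2 n]
    calc infDist (a n) (K₀ : Set α)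
        ≤ infDist (a n) (K n : Set α) + hausdorffDist (K n : Set α) (K₀ : Set α) :=
          infDist_le_infDist_add_hausdorffDist (edist_ne_top (K n) K₀)
      _ = dist (K n) K₀ := by
          rw [infDist_zero_of_mem (ha n), zero_add, NonemptyCompacts.dist_eq]
  exact squeeze_zero (fun n => dist_nonneg) hb hd

lemma aux_track' {α : Type*} [MetricSpace α] (K : ℕ → NonemptyCompacts α) (K₀ : NonemptyCompacts α)
    (hd : Tendsto (fun n => dist (K n) K₀) atTop (𝓝 0)) (y₀ : α) (hy₀ : y₀ ∈ (K₀ : Set α)) :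
    ∃ y : ℕ → α, (∀ n, y n ∈ (K n : Set α)) ∧
      Tendsto (fun n => dist y₀ (y n)) atTop (𝓝 0) := by
  have h1 : ∀ n, ∃ y ∈ (K n : Set α), infDist y₀ (K n : Set α) = dist y₀ y :=
    fun n => (K n).isCompact.exists_infDist_eq_dist (K n).nonempty y₀
  choose y hy hy2 using h1
  refine ⟨y, hy, ?_⟩
  have hb : ∀ n, dist y₀ (y n) ≤ dist (K n) K₀ := by
    intro n
    rw [← hy2 n]
    calc infDist y₀ (K n : Set α)
        ≤ infDist y₀ (K₀ : Set α) + hausdorffDist (K₀ : Set α) (K n : Set α) :=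
          infDist_le_infDist_add_hausdorffDist (edist_ne_top K₀ (K n))
      _ = dist (K n) K₀ := by
          rw [infDist_zero_of_mem hy₀, zero_add, NonemptyCompacts.dist_eq, hausdorffDist_comm,
            ← NonemptyCompacts.dist_eq]
  exact squeeze_zero (fun n => dist_nonneg) hb hd

theorem stmt_11 (N : ℕ) (hN : 1 ≤ N) (k : ℕ) (hk : 0 < k) :
    IsClosed {X : CantorSets N | ∃ L : Submodule ℝ (EuclideanSpace ℝ (Fin N)),
        L ≠ ⊥ ∧ L ≠ ⊤ ∧ ∃ x ∈ (X.1 : Set (EuclideanSpace ℝ (Fin N))),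
          (proj L '' (X.1 : Set (EuclideanSpace ℝ (Fin N)))).Nontrivial ∧
          (1 : ℝ) / k ≤ Metric.infDist (proj L x)
            ((proj L '' (X.1 : Set (EuclideanSpace ℝ (Fin N)))) \ {proj L x})} := by
  classical
  rw [← isSeqClosed_iff_isClosed]
  intro X X₀ hmem hlim
  choose L hLbot hLtop x hx hnt hIdist using hmem
  -- nontriviality witnesses
  have hwex : ∀ n, ∃ w ∈ ((X n).1 : Set (EuclideanSpace ℝ (Fin N))),
      proj (L n) w ≠ proj (L n) (x n) := by
    intro n
    obtain ⟨a, ha, b, hb, hab⟩ := hnt n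
    obtain ⟨a', ha', rfl⟩ := ha
    obtain ⟨b', hb', rfl⟩ := hb
    by_cases h : proj (L n) a' = proj (L n) (x n)
    · exact ⟨b', hb', fun hb2 => hab (h.trans hb2.symm)⟩
    · exact ⟨a', ha', h⟩
  choose w hwmem hwne using hwex
  -- Hausdorff convergence
  have hKt : Tendsto (fun n => (X n).1) atTop (𝓝 X₀.1) :=
    (continuous_subtype_val.tendsto X₀).comp hlim
  have hdist0 : Tendsto (fun n => dist (X n).1 X₀.1) atTop (𝓝 0) :=
    tendsto_iff_dist_tendsto_zero.1 hKt
  -- projection operators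
  set Q : ℕ → EuclideanSpace ℝ (Fin N) →L[ℝ] EuclideanSpace ℝ (Fin N) :=
    fun n => (L n).subtypeL.comp ((L n).orthogonalProjectionOnto) with hQdef
  have hQproj : ∀ n v, Q n v = proj (L n) v := fun n v => rfl
  have hQnorm : ∀ n, ‖Q n‖ ≤ 1 := by
    intro n
    refine ContinuousLinearMap.opNorm_le_bound _ zero_le_one fun v => ?_
    rw [one_mul]
    calc ‖Q n v‖ = ‖(L n).orthogonalProjectionOnto v‖ := rfl
      _ ≤ ‖(L n).orthogonalProjectionOnto‖ * ‖v‖ := ContinuousLinearMap.le_opNorm _ v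
      _ ≤ 1 * ‖v‖ := by
          have := Submodule.orthogonalProjectionOnto_norm_le (L n)
          nlinarith [norm_nonneg v]
      _ = ‖v‖ := one_mul _
  have hQge : ∀ n, 1 ≤ ‖Q n‖ := by
    intro n
    obtain ⟨v, hvL, hv0⟩ := (Submodule.ne_bot_iff _).1 (hLbot n)
    have hQv : Q n v = v := Submodule.starProjection_eq_self_iff.2 hvL
    have h2 := (Q n).le_opNorm v
    rw [hQv] at h2
    have hv : 0 < ‖v‖ := norm_pos_iff.2 hv0
    nlinarith
  have hQge' : ∀ n, 1 ≤ ‖1 - Q n‖ := by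
    intro n
    have hbot : (L n)ᗮ ≠ ⊥ := fun h => hLtop n (Submodule.orthogonal_eq_bot_iff.1 h)
    obtain ⟨v, hvL, hv0⟩ := (Submodule.ne_bot_iff _).1 hbot
    have hQv : Q n v = 0 := by
      have h0 : (L n).orthogonalProjectionOnto v = 0 :=
        Submodule.orthogonalProjectionOnto_apply_of_mem_orthogonal hvL
      show (((L n).orthogonalProjectionOnto v : _) : EuclideanSpace ℝ (Fin N)) = 0
      rw [h0]; rfl
    have h1 : (1 - Q n) v = v := by
      simp [ContinuousLinearMap.sub_apply, ContinuousLinearMap.one_apply, hQv]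
    have h2 := (1 - Q n).le_opNorm v
    rw [h1] at h2
    have hv : 0 < ‖v‖ := norm_pos_iff.2 hv0
    nlinarith
  -- track points
  obtain ⟨z, hz, hzt⟩ := aux_track (fun n => (X n).1) X₀.1 hdist0 x hx
  obtain ⟨u, hu, hut⟩ := aux_track (fun n => (X n).1) X₀.1 hdist0 w hwmem
  -- compactness
  have hcomp : IsCompact ((Metric.closedBall
      (0 : EuclideanSpace ℝ (Fin N) →L[ℝ] EuclideanSpace ℝ (Fin N)) 1) ×ˢ
      ((X₀.1 : Set (EuclideanSpace ℝ (Fin N))) ×ˢ (X₀.1 : Set (EuclideanSpace ℝ (Fin N))))) :=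
    (isCompact_closedBall _ _).prod (X₀.1.isCompact.prod X₀.1.isCompact)
  have hmemS : ∀ n, (Q n, z n, u n) ∈ (Metric.closedBall
      (0 : EuclideanSpace ℝ (Fin N) →L[ℝ] EuclideanSpace ℝ (Fin N)) 1) ×ˢ
      ((X₀.1 : Set (EuclideanSpace ℝ (Fin N))) ×ˢ (X₀.1 : Set (EuclideanSpace ℝ (Fin N)))) := by
    intro n
    refine ⟨?_, hz n, hu n⟩
    rw [Metric.mem_closedBall, dist_zero_right]
    exact hQnorm n
  obtain ⟨p₀, hPmem, φ, hφ, hφt⟩ := hcomp.tendsto_subseq (x := fun n => (Q n, z n, u n)) hmemS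
  obtain ⟨P, x₀, w₀⟩ := p₀
  obtain ⟨-, hx₀, hw₀⟩ := hPmem
  -- component limits
  have hQt : Tendsto (fun j => Q (φ j)) atTop (𝓝 P) := (continuous_fst.tendsto _).comp hφt
  have hzt' : Tendsto (fun j => z (φ j)) atTop (𝓝 x₀) :=
    ((continuous_fst.comp continuous_snd).tendsto _).comp hφt
  have hut' : Tendsto (fun j => u (φ j)) atTop (𝓝 w₀) :=
    ((continuous_snd.comp continuous_snd).tendsto _).comp hφt
  have hxt : Tendsto (fun j => x (φ j)) atTop (𝓝 x₀) := by
    rw [tendsto_iff_dist_tendsto_zero]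
    have h1 : Tendsto (fun j => dist (x (φ j)) (z (φ j)) + dist (z (φ j)) x₀) atTop (𝓝 0) := by
      have := (hzt.comp hφ.tendsto_atTop).add (tendsto_iff_dist_tendsto_zero.1 hzt')
      simpa using this
    exact squeeze_zero (fun _ => dist_nonneg) (fun j => dist_triangle _ _ _) h1
  have hwt : Tendsto (fun j => w (φ j)) atTop (𝓝 w₀) := by
    rw [tendsto_iff_dist_tendsto_zero]
    have h1 : Tendsto (fun j => dist (w (φ j)) (u (φ j)) + dist (u (φ j)) w₀) atTop (𝓝 0) := by
      have := (hut.comp hφ.tendsto_atTop).add (tendsto_iff_dist_tendsto_zero.1 hut')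
      simpa using this
    exact squeeze_zero (fun _ => dist_nonneg) (fun j => dist_triangle _ _ _) h1
  -- joint application limit
  have happ : ∀ {a : ℕ → EuclideanSpace ℝ (Fin N)} {a₀ : EuclideanSpace ℝ (Fin N)},
      Tendsto a atTop (𝓝 a₀) → Tendsto (fun j => Q (φ j) (a j)) atTop (𝓝 (P a₀)) := by
    intro a a₀ hat
    exact ((isBoundedBilinearMap_apply (𝕜 := ℝ)).continuous.tendsto (P, a₀)).comp
      (hQt.prodMk_nhds hat)
  -- P is symmetric
  have hPsymm : ∀ v s : EuclideanSpace ℝ (Fin N),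
      (inner ℝ (P v) s : ℝ) = inner ℝ v (P s) := by
    intro v s
    have h1 : Tendsto (fun j => (inner ℝ (Q (φ j) v) s : ℝ)) atTop (𝓝 (inner ℝ (P v) s)) :=
      (happ tendsto_const_nhds).inner tendsto_const_nhds
    have h2 : Tendsto (fun j => (inner ℝ (Q (φ j) v) s : ℝ)) atTop (𝓝 (inner ℝ v (P s))) := by
      have h3 : (fun j => (inner ℝ (Q (φ j) v) s : ℝ)) = fun j => (inner ℝ v (Q (φ j) s) : ℝ) := by
        funext j
        exact Submodule.inner_starProjection_left_eq_right (L (φ j)) v s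
      rw [h3]
      exact tendsto_const_nhds.inner (happ tendsto_const_nhds)
    exact tendsto_nhds_unique h1 h2
  -- P is idempotent
  have hQidem : ∀ n, Q n * Q n = Q n := by
    intro n
    refine ContinuousLinearMap.ext fun v => ?_
    show Q n (Q n v) = Q n v
    exact Submodule.starProjection_eq_self_iff.2 ((L n).orthogonalProjectionOnto v).2
  have hPidem : P * P = P := by
    have h1 : Tendsto (fun j => Q (φ j) * Q (φ j)) atTop (𝓝 (P * P)) := hQt.mul hQt
    simp only [hQidem] at h1
    exact tendsto_nhds_unique h1 hQt
  have hPP : ∀ v, P (P v) = P v := fun v => by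
    have := DFunLike.congr_fun hPidem v
    simpa [ContinuousLinearMap.mul_apply] using this
  -- the limit subspace
  set Lsub : Submodule ℝ (EuclideanSpace ℝ (Fin N)) := LinearMap.range P.toLinearMap with hLdef
  have hproj : ∀ v, proj Lsub v = P v := by
    intro v
    show ((Lsub.orthogonalProjectionOnto v : _) : EuclideanSpace ℝ (Fin N)) = P v
    apply Submodule.eq_starProjection_of_mem_of_inner_eq_zero
    · exact ⟨v, rfl⟩
    · rintro s ⟨t, rfl⟩
      have h1 : P (v - P v) = 0 := by rw [map_sub, hPP, sub_self]
      calc (inner ℝ (v - P v) (P.toLinearMap t) : ℝ) = inner ℝ (P (v - P v)) t :=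
            (hPsymm (v - P v) t).symm
        _ = 0 := by rw [h1, inner_zero_left]
  have hPnorm : 1 ≤ ‖P‖ :=
    ge_of_tendsto hQt.norm (Eventually.of_forall fun j => hQge (φ j))
  have hLsub_bot : Lsub ≠ ⊥ := by
    intro h
    have hP0 : P = 0 := by
      refine ContinuousLinearMap.ext fun v => ?_
      have hmem : P v ∈ Lsub := ⟨v, rfl⟩
      rw [h] at hmem
      simpa using hmem
    rw [hP0, norm_zero] at hPnorm
    linarith
  have hLsub_top : Lsub ≠ ⊤ := by
    intro h
    have hPid : P = 1 := by
      refine ContinuousLinearMap.ext fun v => ?_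
      have hv : v ∈ Lsub := h ▸ Submodule.mem_top
      obtain ⟨t, ht⟩ := hv
      have h2 : P v = v := by rw [← ht]; exact hPP t
      simpa [ContinuousLinearMap.one_apply] using h2
    have h1 : Tendsto (fun j => 1 - Q (φ j)) atTop (𝓝 (1 - P)) := tendsto_const_nhds.sub hQt
    rw [hPid, sub_self] at h1
    have h2 : (1 : ℝ) ≤ ‖(0 : EuclideanSpace ℝ (Fin N) →L[ℝ] EuclideanSpace ℝ (Fin N))‖ :=
      ge_of_tendsto h1.norm (Eventually.of_forall fun j => hQge' (φ j))
    rw [norm_zero] at h2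
    linarith
  -- limits of images
  have hPx : Tendsto (fun j => Q (φ j) (x (φ j))) atTop (𝓝 (P x₀)) := happ hxt
  -- main distance estimate
  have hmain : ∀ y₀ ∈ (X₀.1 : Set (EuclideanSpace ℝ (Fin N))), P y₀ ≠ P x₀ →
      1 / (k : ℝ) ≤ dist (P x₀) (P y₀) := by
    intro y₀ hy₀ hne
    obtain ⟨y, hy, hyt⟩ := aux_track' (fun n => (X n).1) X₀.1 hdist0 y₀ hy₀
    have hyt' : Tendsto (fun j => y (φ j)) atTop (𝓝 y₀) := by
      rw [tendsto_iff_dist_tendsto_zero]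
      have := hyt.comp hφ.tendsto_atTop
      simp only [Function.comp_def] at this
      simpa [dist_comm] using this
    have hPy : Tendsto (fun j => Q (φ j) (y (φ j))) atTop (𝓝 (P y₀)) := happ hyt'
    have hdd : Tendsto (fun j => dist (Q (φ j) (x (φ j))) (Q (φ j) (y (φ j)))) atTop
        (𝓝 (dist (P x₀) (P y₀))) := hPx.dist hPy
    have hpos : 0 < dist (P x₀) (P y₀) := dist_pos.2 (Ne.symm hne)
    have hev : ∀ᶠ j in atTop,
        1 / (k : ℝ) ≤ dist (Q (φ j) (x (φ j))) (Q (φ j) (y (φ j))) := by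
      filter_upwards [hdd.eventually (eventually_gt_nhds hpos)] with j hj
      have hnej : proj (L (φ j)) (y (φ j)) ≠ proj (L (φ j)) (x (φ j)) := by
        intro hc
        rw [← hQproj, ← hQproj] at hc
        rw [hc] at hj
        simp at hj
      calc 1 / (k : ℝ)
          ≤ infDist (proj (L (φ j)) (x (φ j)))
              ((proj (L (φ j)) '' ((X (φ j)).1 : Set (EuclideanSpace ℝ (Fin N)))) \
                {proj (L (φ j)) (x (φ j))}) := hIdist (φ j)
        _ ≤ dist (proj (L (φ j)) (x (φ j))) (proj (L (φ j)) (y (φ j))) :=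
            infDist_le_dist_of_mem ⟨⟨y (φ j), hy (φ j), rfl⟩, hnej⟩
        _ = dist (Q (φ j) (x (φ j))) (Q (φ j) (y (φ j))) := by rw [hQproj, hQproj]
    exact ge_of_tendsto hdd hev
  -- witness in the limit
  have hw1 : ∀ n, 1 / (k : ℝ) ≤ dist (Q n (x n)) (Q n (w n)) := by
    intro n
    calc 1 / (k : ℝ)
        ≤ infDist (proj (L n) (x n))
            ((proj (L n) '' ((X n).1 : Set (EuclideanSpace ℝ (Fin N)))) \
              {proj (L n) (x n)}) := hIdist n
      _ ≤ dist (proj (L n) (x n)) (proj (L n) (w n)) :=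
          infDist_le_dist_of_mem ⟨⟨w n, hwmem n, rfl⟩, hwne n⟩
      _ = dist (Q n (x n)) (Q n (w n)) := by rw [hQproj, hQproj]
  have hPw : Tendsto (fun j => Q (φ j) (w (φ j))) atTop (𝓝 (P w₀)) := happ hwt
  have hkpos : 0 < 1 / (k : ℝ) := by positivity
  have hwd : 1 / (k : ℝ) ≤ dist (P x₀) (P w₀) :=
    ge_of_tendsto (hPx.dist hPw) (Eventually.of_forall fun j => hw1 (φ j))
  have hwne0 : P w₀ ≠ P x₀ := by
    intro h
    rw [h] at hwd
    simp only [dist_self] at hwd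
    linarith
  -- assemble
  refine ⟨Lsub, hLsub_bot, hLsub_top, x₀, hx₀, ?_, ?_⟩
  · refine ⟨proj Lsub x₀, ⟨x₀, hx₀, rfl⟩, proj Lsub w₀, ⟨w₀, hw₀, rfl⟩, ?_⟩
    rw [hproj, hproj]
    exact Ne.symm hwne0
  · by_contra hlt
    push_neg at hlt
    have hne : ((proj Lsub '' (X₀.1 : Set (EuclideanSpace ℝ (Fin N)))) \
        {proj Lsub x₀}).Nonempty := by
      refine ⟨proj Lsub w₀, ⟨w₀, hw₀, rfl⟩, ?_⟩
      intro hcon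
      have : proj Lsub w₀ = proj Lsub x₀ := hcon
      rw [hproj, hproj] at this
      exact hwne0 this
    obtain ⟨sY, hsY, hslt⟩ := (infDist_lt_iff hne).1 hlt
    obtain ⟨⟨y₀, hy₀, rfl⟩, hsne⟩ := hsY
    have hge : 1 / (k : ℝ) ≤ dist (proj Lsub x₀) (proj Lsub y₀) := by
      rw [hproj, hproj]
      refine hmain y₀ hy₀ ?_
      intro h
      apply hsne
      show proj Lsub y₀ = proj Lsub x₀
      rw [hproj, hproj]
      exact h
    linarith
end

section
/- For N ≥ 1 and each k ∈ ℕ, the set ℐ_k of all Cantor sets X ⊆ ℝ^N for which there exist a non-zero proper linear subspace L ⊆ ℝ^N and a point x ∈ X with |p_L(X)| > 1 and d(p_L x, p_L(X) \ {p_L x}) ≥ 1/k, is nowhere dense in 𝒞(ℝ^N). -/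
set_option maxHeartbeats 1000000

open Cardinal Set Metric Topology

noncomputable def cf : (ℕ → Bool) → ℝ := cantorFunction (1/3)

lemma cf_summable (a : ℕ → Bool) : Summable (cantorFunctionAux (1/3) a) :=
  summable_cantor_function a (by norm_num) (by norm_num)

lemma cf_injective : Function.Injective cf :=
  cantorFunction_injective (by norm_num) (by norm_num)

lemma cf_nonneg (a : ℕ → Bool) : 0 ≤ cf a :=
  tsum_nonneg fun n => cantorFunctionAux_nonneg (by norm_num)

lemma cf_le (a : ℕ → Bool) : cf a ≤ 3/2 := by
  have h := Summable.tsum_le_tsum (f := cantorFunctionAux (1/3) a) (g := fun n => (1/3:ℝ)^n)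
    (fun n => by cases h : a n <;> simp [cantorFunctionAux, h, pow_nonneg]) (cf_summable a)
    (summable_geometric_of_lt_one (by norm_num) (by norm_num))
  rw [tsum_geometric_of_lt_one (by norm_num) (by norm_num)] at h
  calc cf a ≤ (1 - 1/3)⁻¹ := h
  _ = 3/2 := by norm_num

lemma cf_continuous : Continuous cf := by
  apply continuous_tsum (u := fun n => (1/3:ℝ)^n)
  · intro n
    exact (continuous_of_discreteTopology (f := fun b : Bool => cond b ((1/3:ℝ)^n) 0)).comp
      (continuous_apply n)
  · exact summable_geometric_of_lt_one (by norm_num) (by norm_num)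
  · intro n a
    cases h : a n <;> simp [cantorFunctionAux, h, pow_nonneg] <;> positivity

lemma cf_flip (a : ℕ → Bool) (n : ℕ) :
    |cf (Function.update a n (!a n)) - cf a| ≤ (1/3:ℝ)^n := by
  set b := Function.update a n (!a n) with hb
  have hsum : Summable (fun m => cantorFunctionAux (1/3) b m - cantorFunctionAux (1/3) a m) :=
    (cf_summable b).sub (cf_summable a)
  have : cf b - cf a = ∑' m, (cantorFunctionAux (1/3) b m - cantorFunctionAux (1/3) a m) :=
    (Summable.tsum_sub (cf_summable b) (cf_summable a)).symm
  rw [this, tsum_eq_single n (fun m hm => by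
    have : b m = a m := Function.update_of_ne hm _ _
    rw [cantorFunctionAux_eq this, sub_self])]
  have h1 : (0:ℝ) ≤ (1/3:ℝ)^n := by positivity
  cases h : a n <;> cases h' : b n <;>
    simp [cantorFunctionAux, h, h', abs_le] <;> constructor <;> nlinarith

section dust
variable {N : ℕ}
local notation "E" => EuclideanSpace ℝ (Fin N)

/-- The dust map -/
noncomputable def dust {n : ℕ} (g : Fin n → E) (s : ℝ) (e1 : E) :
    Fin n × (ℕ → Bool) → E := fun p => g p.1 + (s * cf p.2) • e1
-- note: rewrite s * cf to cf * s? keep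

lemma dust_dist {n : ℕ} (g : Fin n → E) {s : ℝ} (hs : 0 < s) (e1 : E) (he1 : ‖e1‖ = 1)
    (p : Fin n × (ℕ → Bool)) : dist (dust g s e1 p) (g p.1) ≤ 2 * s := by
  rw [dust, dist_eq_norm, add_sub_cancel_left, norm_smul, he1, mul_one, Real.norm_eq_abs,
    abs_mul, abs_of_pos hs, abs_of_nonneg (cf_nonneg _)]
  nlinarith [cf_le p.2, cf_nonneg p.2]

lemma dust_injective {n : ℕ} {g : Fin n → E} {γ s : ℝ} (hs : 0 < s) (hγ : 4 * s < γ)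
    (hg : Function.Injective g)
    (hsep : ∀ i i', i ≠ i' → γ ≤ dist (g i) (g i')) {e1 : E} (he1 : ‖e1‖ = 1) :
    Function.Injective (dust g s e1) := by
  have he0 : e1 ≠ 0 := by intro h; rw [h, norm_zero] at he1; norm_num at he1
  intro p q hpq
  have hdp := dust_dist g hs e1 he1 p
  have hdq := dust_dist g hs e1 he1 q
  have h1 : p.1 = q.1 := by
    by_contra h
    have t1 : dist (g p.1) (g q.1) ≤ dist (g p.1) (dust g s e1 p) + dist (dust g s e1 p) (g q.1) :=
      dist_triangle _ _ _
    have t2 : dist (dust g s e1 p) (g q.1) = dist (dust g s e1 q) (g q.1) := by rw [hpq]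
    have t3 : dist (g p.1) (dust g s e1 p) = dist (dust g s e1 p) (g p.1) := dist_comm _ _
    have := hsep _ _ h
    linarith
  have h2 : (s * cf p.2) • e1 = (s * cf q.2) • e1 := by
    have := hpq; rw [dust, dust, h1] at this; exact add_left_cancel this
  have h3 : s * cf p.2 = s * cf q.2 := by
    by_contra h
    exact h (sub_eq_zero.mp (by
      have := sub_eq_zero.mpr h2
      rw [← sub_smul] at this
      rcases smul_eq_zero.mp this with h' | h'
      · exact h'
      · exact absurd h' he0))
  have h4 : p.2 = q.2 := cf_injective (mul_left_cancel₀ (ne_of_gt hs) h3)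
  exact Prod.ext h1 h4

lemma dust_continuous {n : ℕ} (g : Fin n → E) (s : ℝ) (e1 : E) :
    Continuous (dust g s e1) := by
  apply Continuous.add
  · exact (continuous_of_discreteTopology (f := g)).comp continuous_fst
  · exact ((continuous_const.mul (cf_continuous.comp continuous_snd)).smul continuous_const)

lemma dust_isCantorSet {n : ℕ} {g : Fin n → E} {γ s : ℝ} (hn : 0 < n) (hs : 0 < s)
    (hγ : 4 * s < γ) (hg : Function.Injective g)
    (hsep : ∀ i i', i ≠ i' → γ ≤ dist (g i) (g i')) {e1 : E} (he1 : ‖e1‖ = 1) :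
    (Set.range (dust g s e1)).Nonempty ∧ IsCompact (Set.range (dust g s e1)) ∧
      Perfect (Set.range (dust g s e1)) ∧ IsTotallyDisconnected (Set.range (dust g s e1)) := by
  have hcont := dust_continuous g s e1
  have hinj := dust_injective hs hγ hg hsep he1
  have hcpt : IsCompact (Set.range (dust g s e1)) := isCompact_range hcont
  have hemb : Topology.IsEmbedding (dust g s e1) :=
    (hcont.isClosedEmbedding hinj).toIsEmbedding
  refine ⟨⟨dust g s e1 (⟨0, hn⟩, fun _ => false), mem_range_self _⟩, hcpt, ?_, ?_⟩
  · refine ⟨hcpt.isClosed, ?_⟩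
    rintro x ⟨⟨i, a⟩, rfl⟩
    rw [accPt_iff_nhds]
    intro U hU
    obtain ⟨ε, hε, hball⟩ := Metric.mem_nhds_iff.mp hU
    obtain ⟨m, hm⟩ := exists_pow_lt_of_lt_one (show (0:ℝ) < ε / (s+1) by positivity)
      (show (1/3:ℝ) < 1 by norm_num)
    set b := Function.update a m (!a m) with hbdef
    have hba : b ≠ a := by
      intro h
      have : b m = a m := by rw [h]
      rw [hbdef, Function.update_self] at this
      cases h' : a m <;> rw [h'] at this <;> simp at this
    refine ⟨dust g s e1 (i, b), ⟨hball ?_, mem_range_self _⟩, fun h => hba (congrArg Prod.snd (hinj h))⟩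
    rw [Metric.mem_ball, dust, dust, dist_eq_norm]
    have : g i + (s * cf b) • e1 - (g i + (s * cf a) • e1) = ((s * cf b) - (s * cf a)) • e1 := by
      module
    rw [this, norm_smul, he1, mul_one, ← mul_sub, Real.norm_eq_abs, abs_mul, abs_of_pos hs]
    have h1 : |cf b - cf a| ≤ (1/3:ℝ)^m := cf_flip a m
    have h2 : s * (1/3:ℝ)^m < ε := by
      have : (1/3:ℝ)^m < ε / (s+1) := hm
      calc s * (1/3:ℝ)^m ≤ (s+1) * (1/3:ℝ)^m := by nlinarith [pow_nonneg (by norm_num : (0:ℝ) ≤ 1/3) m]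
        _ < (s+1) * (ε / (s+1)) := by apply mul_lt_mul_of_pos_left hm; positivity
        _ = ε := by field_simp
    calc s * |cf b - cf a| ≤ s * (1/3:ℝ)^m := by nlinarith
      _ < ε := h2
  · rw [hemb.isTotallyDisconnected_range]
    infer_instance
end dust

section projlemmas
variable {N : ℕ}
local notation "E" => EuclideanSpace ℝ (Fin N)

lemma proj_sub (L : Submodule ℝ E) (x y : E) : proj L x - proj L y = proj L (x - y) := by
  simp [proj, map_sub]

lemma proj_add (L : Submodule ℝ E) (x y : E) : proj L (x + y) = proj L x + proj L y := by
  simp [proj, map_add]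

lemma norm_proj_le (L : Submodule ℝ E) (v : E) : ‖proj L v‖ ≤ ‖v‖ := by
  have h := (L.orthogonalProjectionOnto).le_opNorm v
  have h2 := Submodule.orthogonalProjectionOnto_norm_le L
  calc ‖proj L v‖ = ‖L.orthogonalProjectionOnto v‖ := rfl
    _ ≤ ‖L.orthogonalProjectionOnto‖ * ‖v‖ := h
    _ ≤ 1 * ‖v‖ := by nlinarith [norm_nonneg v]
    _ = ‖v‖ := one_mul _

lemma inner_le_norm_proj (L : Submodule ℝ E) {u : E} (hu : u ∈ L) (hu1 : ‖u‖ = 1) (v : E) :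
    |(inner ℝ u v : ℝ)| ≤ ‖proj L v‖ := by
  have hmem : v - proj L v ∈ Lᗮ := Submodule.sub_starProjection_mem_orthogonal (K := L) v
  have h1 : (inner ℝ u (v - proj L v) : ℝ) = 0 := (Submodule.mem_orthogonal L _).mp hmem u hu
  have h3 := inner_sub_right (𝕜 := ℝ) u v (proj L v)
  rw [h1] at h3
  have h2 : (inner ℝ u v : ℝ) = inner ℝ u (proj L v) := by linarith
  rw [h2]
  calc |(inner ℝ u (proj L v) : ℝ)| ≤ ‖u‖ * ‖proj L v‖ := abs_real_inner_le_norm _ _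
    _ = ‖proj L v‖ := by rw [hu1, one_mul]

-- coordinate bounds
lemma coord_le_norm (x : E) (j : Fin N) : |x j| ≤ ‖x‖ := by
  rw [EuclideanSpace.norm_eq]
  have : |x j| = Real.sqrt (|x j|^2) := by rw [Real.sqrt_sq_eq_abs, abs_abs]
  rw [this]
  apply Real.sqrt_le_sqrt
  have hx : |x j|^2 = ‖x j‖^2 := by rw [Real.norm_eq_abs]
  rw [hx]
  exact Finset.single_le_sum (f := fun i => ‖x i‖^2) (fun i _ => by positivity)
    (Finset.mem_univ j)

lemma coord_dist_le (x y : E) (j : Fin N) : |x j - y j| ≤ dist x y := by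
  rw [dist_eq_norm]
  have : x j - y j = (x - y) j := by simp
  rw [this]
  exact coord_le_norm _ _

lemma exists_coord {u : E} (hN : 0 < N) (hu : ‖u‖ = 1) :
    ∃ j, 1 / Real.sqrt N ≤ |u j| := by
  have hsum : ∑ i, u i ^ 2 = 1 := by
    have := EuclideanSpace.norm_eq u
    rw [hu] at this
    have h2 : (1:ℝ) = Real.sqrt (∑ i, ‖u i‖^2) := this
    have h3 : ∑ i, ‖u i‖^2 = ∑ i, u i ^2 := by simp [Real.norm_eq_abs, sq_abs]
    nlinarith [Real.sq_sqrt (show (0:ℝ) ≤ ∑ i, ‖u i‖^2 by positivity)]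
  haveI : Nonempty (Fin N) := ⟨⟨0, hN⟩⟩
  obtain ⟨j, -, hj⟩ := Finset.exists_max_image Finset.univ (fun i => |u i|) ⟨⟨0,hN⟩, Finset.mem_univ _⟩
  refine ⟨j, ?_⟩
  have h1 : (1:ℝ) ≤ N * |u j|^2 := by
    calc (1:ℝ) = ∑ i, u i ^2 := hsum.symm
      _ ≤ ∑ _i : Fin N, |u j|^2 := Finset.sum_le_sum (fun i _ => by
          have := hj i (Finset.mem_univ i); nlinarith [abs_nonneg (u i), sq_abs (u i)])
      _ = N * |u j|^2 := by rw [Finset.sum_const, Finset.card_univ, Fintype.card_fin]; ring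
  have hNpos : (0:ℝ) < N := by exact_mod_cast hN
  have hsq : Real.sqrt N > 0 := Real.sqrt_pos.mpr hNpos
  rw [div_le_iff₀ hsq]
  nlinarith [Real.sq_sqrt (le_of_lt hNpos), abs_nonneg (u j), Real.sqrt_nonneg (N:ℝ), sq_nonneg (|u j| * Real.sqrt N - 1), show (0:ℝ) < 1 + |u j| * Real.sqrt N by positivity]
end projlemmas

section centers
variable {N : ℕ}
local notation "E" => EuclideanSpace ℝ (Fin N)

/-- lattice embedding -/
noncomputable def lat (γ : ℝ) : (Fin N → ℤ) → E :=
  fun z => (WithLp.equiv 2 (Fin N → ℝ)).symm (fun j => γ * z j)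

lemma lat_apply (γ : ℝ) (z : Fin N → ℤ) (j : Fin N) : lat γ z j = γ * z j := rfl

noncomputable def rnd (γ : ℝ) (x : E) : E := lat γ (fun j => round (x j / γ))

noncomputable def armv (γ : ℝ) : Option (Fin N) → E :=
  fun o => o.elim 0 (fun j => γ • EuclideanSpace.single j (1:ℝ))

lemma norm_armv {γ : ℝ} (hγ : 0 < γ) (o : Option (Fin N)) : ‖armv γ o‖ ≤ γ := by
  cases o with
  | none => simp [armv]; positivity
  | some j =>
      simp only [armv, Option.elim, norm_smul, Real.norm_eq_abs, abs_of_pos hγ,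
        EuclideanSpace.norm_single, norm_one, mul_one]
      exact le_refl _

lemma rnd_dist {γ : ℝ} (hγ : 0 < γ) (x : E) : dist (rnd γ x) x ≤ γ * Real.sqrt N / 2 := by
  have hcoord : ∀ j, dist (rnd γ x j) (x j) ≤ γ / 2 := by
    intro j
    rw [Real.dist_eq, rnd, lat_apply]
    have h1 : γ * (round (x j / γ) : ℝ) - x j = -(γ * (x j / γ - round (x j / γ))) := by
      field_simp
      ring
    rw [h1, abs_neg, abs_mul, abs_of_pos hγ]
    have := abs_sub_round (x j / γ)
    nlinarith
  rw [EuclideanSpace.dist_eq]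
  have hsum : ∑ j, dist (rnd γ x j) (x j) ^ 2 ≤ N * (γ/2)^2 := by
    calc ∑ j, dist (rnd γ x j) (x j) ^ 2 ≤ ∑ _j : Fin N, (γ/2)^2 :=
          Finset.sum_le_sum (fun j _ => by
            have := hcoord j; nlinarith [dist_nonneg (x := rnd γ x j) (y := x j)])
      _ = N * (γ/2)^2 := by rw [Finset.sum_const, Finset.card_univ, Fintype.card_fin]; ring
  calc Real.sqrt (∑ j, dist (rnd γ x j) (x j) ^ 2) ≤ Real.sqrt (N * (γ/2)^2) :=
        Real.sqrt_le_sqrt hsum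
    _ = Real.sqrt N * (γ/2) := by
        rw [Real.sqrt_mul (by positivity), Real.sqrt_sq (by positivity)]
    _ = γ * Real.sqrt N / 2 := by ring

lemma centers_spec (hN : 0 < N) {X₀ : Set E} (hne : X₀.Nonempty) (hcpt : IsCompact X₀)
    {γ : ℝ} (hγ : 0 < γ) :
    ∃ C : Set E, C.Finite ∧ C.Nonempty ∧
      (∀ c ∈ C, ∃ x ∈ X₀, dist c x ≤ γ * Real.sqrt N + γ) ∧
      (∀ x ∈ X₀, ∃ c ∈ C, dist x c ≤ γ * Real.sqrt N) ∧
      (∀ c ∈ C, ∀ c' ∈ C, c ≠ c' → γ ≤ dist c c') ∧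
      (∀ c ∈ C, ∀ L : Submodule ℝ E, L ≠ ⊥ →
        ∃ c' ∈ C, γ / (2 * Real.sqrt N) ≤ ‖proj L (c - c')‖ ∧ dist c c' ≤ 2 * γ) := by
  classical
  have hsqrt : (1:ℝ) ≤ Real.sqrt N := by
    rw [show (1:ℝ) = Real.sqrt 1 by simp]
    exact Real.sqrt_le_sqrt (by exact_mod_cast hN)
  have hsqrtpos : (0:ℝ) < Real.sqrt N := by linarith
  set C : Set E := ⋃ x ∈ X₀, ⋃ o : Option (Fin N), {rnd γ x + armv γ o} with hC
  have hmemC : ∀ c, c ∈ C ↔ ∃ x ∈ X₀, ∃ o, c = rnd γ x + armv γ o := by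
    intro c; simp [hC, eq_comm]
  -- each element of C is a lattice point
  have hlatt : ∀ c ∈ C, ∃ z : Fin N → ℤ, c = lat γ z := by
    intro c hc
    obtain ⟨x, -, o, rfl⟩ := (hmemC c).mp hc
    cases o with
    | none =>
        exact ⟨fun j => round (x j / γ), by simp [armv, rnd]⟩
    | some j =>
        refine ⟨(fun i => round (x i / γ)) + Pi.single j 1, ?_⟩
        apply PiLp.ext
        intro i
        simp only [lat_apply, Pi.add_apply, PiLp.add_apply, rnd, armv, Option.elim,
          PiLp.smul_apply, EuclideanSpace.single_apply, Pi.single_apply, smul_eq_mul]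
        push_cast
        by_cases h : i = j <;> simp [h] <;> ring
  refine ⟨C, ?_, ?_, ?_, ?_, ?_, ?_⟩
  · -- finiteness
    obtain ⟨R₀, hR₀⟩ := hcpt.isBounded.subset_closedBall (0 : E)
    set R := max R₀ 0 with hR
    have hRx : ∀ x ∈ X₀, ‖x‖ ≤ R := fun x hx =>
      le_trans (mem_closedBall_zero_iff.mp (hR₀ hx)) (le_max_left _ _)
    set B : ℤ := ⌈R / γ⌉ + 1 with hB
    have hround : ∀ x ∈ X₀, ∀ j, round (x j / γ) ∈ Set.Icc (-B) B := by
      intro x hx j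
      have h1 : |x j| ≤ R := le_trans (coord_le_norm x j) (hRx x hx)
      have h2 : |x j / γ| ≤ R / γ := by
        rw [abs_div, abs_of_pos hγ]
        exact div_le_div_of_nonneg_right h1 hγ.le
      have h3 : |(round (x j / γ) : ℝ)| ≤ R / γ + 1/2 := by
        have h4 := abs_sub_round (x j / γ)
        have h5 := abs_sub_abs_le_abs_sub ((round (x j / γ) : ℝ)) (x j / γ)
        rw [abs_sub_comm] at h5
        linarith
      have h6 : (R / γ : ℝ) ≤ (⌈R / γ⌉ : ℝ) := Int.le_ceil _
      have h7 : |(round (x j / γ) : ℝ)| ≤ (B : ℝ) := by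
        push_cast [hB]; linarith
      have h8 : |round (x j / γ)| ≤ B := by
        have h9 : ((|round (x j / γ)| : ℤ) : ℝ) ≤ (B : ℝ) := by rw [Int.cast_abs]; exact h7
        exact_mod_cast h9
      rw [Set.mem_Icc]
      exact abs_le.mp h8
    have hfin1 : ((fun x => (fun j => round (x j / γ)) : E → (Fin N → ℤ)) '' X₀).Finite := by
      apply Set.Finite.subset (Set.finite_Icc (fun _ : Fin N => -B) (fun _ => B))
      rintro z ⟨x, hx, rfl⟩
      rw [Set.mem_Icc]
      constructor <;> intro j <;> have := hround x hx j <;> rw [Set.mem_Icc] at this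
      · exact this.1
      · exact this.2
    have hfin2 : (Set.range (armv γ (N := N))).Finite := Set.finite_range _
    apply Set.Finite.subset (Set.Finite.image2 (· + ·) (hfin1.image (lat γ)) hfin2)
    intro c hc
    obtain ⟨x, hx, o, rfl⟩ := (hmemC c).mp hc
    exact Set.mem_image2_of_mem ⟨_, ⟨x, hx, rfl⟩, rfl⟩ ⟨o, rfl⟩
  · -- nonempty
    obtain ⟨x₀, hx₀⟩ := hne
    exact ⟨rnd γ x₀ + armv γ none, (hmemC _).mpr ⟨x₀, hx₀, none, rfl⟩⟩
  · -- P1: close to X₀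
    intro c hc
    obtain ⟨x, hx, o, rfl⟩ := (hmemC c).mp hc
    refine ⟨x, hx, ?_⟩
    calc dist (rnd γ x + armv γ o) x ≤ dist (rnd γ x + armv γ o) (rnd γ x) + dist (rnd γ x) x :=
          dist_triangle _ _ _
      _ ≤ γ + γ * Real.sqrt N / 2 := by
          apply add_le_add _ (rnd_dist hγ x)
          rw [dist_eq_norm, add_sub_cancel_left]
          exact norm_armv hγ o
      _ ≤ γ * Real.sqrt N + γ := by nlinarith
  · -- P2: net property
    intro x hx
    refine ⟨rnd γ x + armv γ none, (hmemC _).mpr ⟨x, hx, none, rfl⟩, ?_⟩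
    have : rnd γ x + armv γ none = rnd γ x := by simp [armv]
    rw [this, dist_comm]
    calc dist (rnd γ x) x ≤ γ * Real.sqrt N / 2 := rnd_dist hγ x
      _ ≤ γ * Real.sqrt N := by nlinarith
  · -- separation
    intro c hc c' hc' hne'
    obtain ⟨z, rfl⟩ := hlatt c hc
    obtain ⟨w, rfl⟩ := hlatt c' hc'
    have hzw : z ≠ w := fun h => hne' (by rw [h])
    obtain ⟨j, hj⟩ := Function.ne_iff.mp hzw
    have h1 : (1:ℝ) ≤ |(z j : ℝ) - (w j : ℝ)| := by
      have h0 : z j - w j ≠ 0 := sub_ne_zero.mpr hj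
      have h2 := Int.one_le_abs h0
      have h3 : ((1:ℤ):ℝ) ≤ ((|z j - w j| : ℤ) : ℝ) := by exact_mod_cast h2
      rw [Int.cast_abs, Int.cast_sub] at h3
      exact_mod_cast h3
    calc γ = γ * 1 := by ring
      _ ≤ γ * |(z j : ℝ) - w j| := by nlinarith
      _ = |lat γ z j - lat γ w j| := by rw [lat_apply, lat_apply, ← mul_sub, abs_mul, abs_of_pos hγ]
      _ ≤ dist (lat γ z) (lat γ w) := coord_dist_le _ _ _
  · -- buddy
    intro c hc L hL
    obtain ⟨u₀, hu₀L, hu₀⟩ := Submodule.exists_mem_ne_zero_of_ne_bot hL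
    set u : E := ‖u₀‖⁻¹ • u₀ with hu
    have huL : u ∈ L := L.smul_mem _ hu₀L
    have hu1 : ‖u‖ = 1 := norm_smul_inv_norm hu₀
    obtain ⟨j, hj⟩ := exists_coord hN hu1
    have hinner_e : ∀ i : Fin N, (inner ℝ u (EuclideanSpace.single i (1:ℝ)) : ℝ) = u i := by
      intro i
      rw [EuclideanSpace.inner_single_right]
      simp
    obtain ⟨x, hx, o, rfl⟩ := (hmemC _).mp hc
    have harm : ∀ o', rnd γ x + armv γ o' ∈ C := fun o' => (hmemC _).mpr ⟨x, hx, o', rfl⟩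
    have key : ∀ (v : E), γ / (2 * Real.sqrt N) ≤ |(inner ℝ u v : ℝ)| →
        γ / (2 * Real.sqrt N) ≤ ‖proj L v‖ :=
      fun v h => le_trans h (inner_le_norm_proj L huL hu1 v)
    rcases o with - | j'
    · -- c = rnd x, buddy = arm j
      refine ⟨rnd γ x + armv γ (some j), harm _, ?_, ?_⟩
      · apply key
        have hv : rnd γ x + armv γ none - (rnd γ x + armv γ (some j))
            = -(γ • EuclideanSpace.single j (1:ℝ)) := by
          simp [armv]
        rw [hv, inner_neg_right, abs_neg, real_inner_smul_right, hinner_e j, abs_mul,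
          abs_of_pos hγ]
        calc γ / (2 * Real.sqrt N) ≤ γ * (1 / Real.sqrt N) := by
              rw [mul_one_div, div_le_div_iff₀ (by positivity) (by positivity)]
              nlinarith
          _ ≤ γ * |u j| := mul_le_mul_of_nonneg_left hj hγ.le
      · have hv : rnd γ x + armv γ none - (rnd γ x + armv γ (some j))
            = -(γ • EuclideanSpace.single j (1:ℝ)) := by simp [armv]
        rw [dist_eq_norm, hv, norm_neg, norm_smul, Real.norm_eq_abs, abs_of_pos hγ,
          EuclideanSpace.norm_single, norm_one, mul_one]
        nlinarith
    · by_cases hj' : 1 / (2 * Real.sqrt N) ≤ |u j'|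
      · -- buddy = center
        refine ⟨rnd γ x + armv γ none, harm _, ?_, ?_⟩
        · apply key
          have hv : rnd γ x + armv γ (some j') - (rnd γ x + armv γ none)
              = γ • EuclideanSpace.single j' (1:ℝ) := by simp [armv]
          rw [hv, real_inner_smul_right, hinner_e j', abs_mul, abs_of_pos hγ]
          calc γ / (2 * Real.sqrt N) = γ * (1 / (2 * Real.sqrt N)) := by ring
            _ ≤ γ * |u j'| := mul_le_mul_of_nonneg_left hj' hγ.le
        · have hv : rnd γ x + armv γ (some j') - (rnd γ x + armv γ none)
              = γ • EuclideanSpace.single j' (1:ℝ) := by simp [armv]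
          rw [dist_eq_norm, hv, norm_smul, Real.norm_eq_abs, abs_of_pos hγ,
            EuclideanSpace.norm_single, norm_one, mul_one]
          nlinarith
      · -- buddy = arm j (note j ≠ j')
        push_neg at hj'
        refine ⟨rnd γ x + armv γ (some j), harm _, ?_, ?_⟩
        · apply key
          have hv : rnd γ x + armv γ (some j') - (rnd γ x + armv γ (some j))
              = γ • (EuclideanSpace.single j' (1:ℝ) - EuclideanSpace.single j (1:ℝ)) := by
            simp only [armv, Option.elim]
            rw [smul_sub]
            abel
          rw [hv, real_inner_smul_right, inner_sub_right, hinner_e j', hinner_e j, abs_mul,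
            abs_of_pos hγ]
          have h1 : 1 / Real.sqrt N - 1 / (2 * Real.sqrt N) = 1 / (2 * Real.sqrt N) := by
            field_simp; ring
          have h2 : 1 / (2 * Real.sqrt N) ≤ |u j' - u j| := by
            calc 1 / (2 * Real.sqrt N) = 1 / Real.sqrt N - 1 / (2 * Real.sqrt N) := h1.symm
              _ ≤ |u j| - |u j'| := by linarith
              _ ≤ |u j' - u j| := by
                  have := abs_sub_abs_le_abs_sub (u j) (u j')
                  rw [abs_sub_comm] at this
                  linarith
          calc γ / (2 * Real.sqrt N) = γ * (1 / (2 * Real.sqrt N)) := by ring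
            _ ≤ γ * |u j' - u j| := mul_le_mul_of_nonneg_left h2 hγ.le
        · have hv : rnd γ x + armv γ (some j') - (rnd γ x + armv γ (some j))
              = γ • (EuclideanSpace.single j' (1:ℝ) - EuclideanSpace.single j (1:ℝ)) := by
            simp only [armv, Option.elim]
            rw [smul_sub]
            abel
          rw [dist_eq_norm, hv, norm_smul, Real.norm_eq_abs, abs_of_pos hγ]
          have : ‖EuclideanSpace.single j' (1:ℝ) - EuclideanSpace.single j (1:ℝ)‖ ≤ 2 := by
            calc ‖EuclideanSpace.single j' (1:ℝ) - EuclideanSpace.single j (1:ℝ)‖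
                ≤ ‖EuclideanSpace.single j' (1:ℝ)‖ + ‖EuclideanSpace.single j (1:ℝ)‖ :=
                  norm_sub_le _ _
              _ = 2 := by rw [EuclideanSpace.norm_single, EuclideanSpace.norm_single]; norm_num
          nlinarith
end centers

section master
variable {N : ℕ}
local notation "E" => EuclideanSpace ℝ (Fin N)

lemma master (hN : 1 ≤ N) (k : ℕ) (hk : 0 < k)
    (X₀ : TopologicalSpace.NonemptyCompacts E) {ε : ℝ} (hε : 0 < ε) :
    ∃ Y : TopologicalSpace.NonemptyCompacts E, IsCantorSet (Y : Set E) ∧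
      hausdorffDist (Y : Set E) (X₀ : Set E) < ε ∧
      ∃ η > 0, ∀ Z : TopologicalSpace.NonemptyCompacts E,
        hausdorffDist (Z : Set E) (Y : Set E) < η →
        ¬ (∃ L : Submodule ℝ E, L ≠ ⊥ ∧ L ≠ ⊤ ∧ ∃ x ∈ (Z : Set E),
            (proj L '' (Z : Set E)).Nontrivial ∧
            (1:ℝ)/k ≤ infDist (proj L x) ((proj L '' (Z : Set E)) \ {proj L x})) := by
  classical
  have hN0 : 0 < N := hN
  have hsqrt : (1:ℝ) ≤ Real.sqrt N := by
    rw [show (1:ℝ) = Real.sqrt 1 by simp]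
    exact Real.sqrt_le_sqrt (by exact_mod_cast hN0)
  have hsqrtpos : (0:ℝ) < Real.sqrt N := by linarith
  have hkpos : (0:ℝ) < 1/k := by positivity
  set μ : ℝ := min ε (1/k) with hμ
  have hμpos : 0 < μ := lt_min hε hkpos
  set γ : ℝ := μ / (6 * Real.sqrt N) with hγdef
  have hγ : 0 < γ := by positivity
  set s : ℝ := γ / (24 * Real.sqrt N) with hsdef
  have hs : 0 < s := by positivity
  have h24 : s * (24 * Real.sqrt N) = γ := by
    rw [hsdef]; field_simp
  have hssq : s * 1 ≤ s * Real.sqrt N := mul_le_mul_of_nonneg_left hsqrt hs.le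
  have hsγ : 4 * s < γ := by nlinarith
  have hsle : s ≤ γ := by nlinarith
  obtain ⟨C, hCfin, hCne, hP1, hP2, hsep, hbuddy⟩ :=
    centers_spec hN0 X₀.nonempty X₀.isCompact hγ
  -- enumerate C
  set F := hCfin.toFinset with hF
  have hFC : ∀ c, c ∈ F ↔ c ∈ C := fun c => hCfin.mem_toFinset
  set n := F.card with hn
  have hnpos : 0 < n := Finset.card_pos.mpr (by
    obtain ⟨c, hc⟩ := hCne; exact ⟨c, (hFC c).mpr hc⟩)
  set eqv := F.equivFin with heqv
  set g : Fin n → E := fun i => ((eqv.symm i : F) : E) with hg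
  have hg_inj : Function.Injective g := by
    intro i i' h
    exact eqv.symm.injective (Subtype.ext h)
  have hg_mem : ∀ i, g i ∈ C := fun i => (hFC _).mp (eqv.symm i).2
  have hg_surj : ∀ c ∈ C, ∃ i, g i = c := by
    intro c hc
    refine ⟨eqv ⟨c, (hFC c).mpr hc⟩, ?_⟩
    rw [hg]
    simp
  have hsep' : ∀ i i', i ≠ i' → γ ≤ dist (g i) (g i') := by
    intro i i' h
    exact hsep _ (hg_mem i) _ (hg_mem i') (fun hgg => h (hg_inj hgg))
  set e1 : E := EuclideanSpace.single (⟨0, hN0⟩ : Fin N) (1:ℝ) with he1def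
  have he1 : ‖e1‖ = 1 := by rw [he1def, EuclideanSpace.norm_single, norm_one]
  obtain ⟨hYne, hYcpt, hYperf, hYtd⟩ := dust_isCantorSet hnpos hs hsγ hg_inj hsep' he1
  refine ⟨⟨⟨Set.range (dust g s e1), hYcpt⟩, hYne⟩, ⟨hYne, hYcpt, hYperf, hYtd⟩, ?_, ?_⟩
  · -- Hausdorff distance
    apply lt_of_le_of_lt (hausdorffDist_le_of_mem_dist (show (0:ℝ) ≤ γ * Real.sqrt N + γ + 2*s
      by positivity) ?_ ?_)
    · -- γ√N + γ + 2s < ε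
      have h1 : γ * Real.sqrt N = μ / 6 := by
        rw [hγdef]; field_simp
      have h2 : γ ≤ γ * Real.sqrt N := by nlinarith
      have h3 : 2 * s ≤ γ := by linarith
      have : γ * Real.sqrt N + γ + 2*s ≤ 3 * (μ/6) := by
        rw [← h1]; linarith
      have hμε : μ ≤ ε := min_le_left _ _
      linarith
    · -- Y side
      rintro y ⟨p, rfl⟩
      obtain ⟨x, hx, hdx⟩ := hP1 (g p.1) (hg_mem p.1)
      refine ⟨x, hx, ?_⟩
      calc dist (dust g s e1 p) x ≤ dist (dust g s e1 p) (g p.1) + dist (g p.1) x :=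
            dist_triangle _ _ _
        _ ≤ 2 * s + (γ * Real.sqrt N + γ) := add_le_add (dust_dist g hs e1 he1 p) hdx
        _ = γ * Real.sqrt N + γ + 2*s := by ring
    · -- X₀ side
      intro x hx
      obtain ⟨c, hc, hdc⟩ := hP2 x hx
      obtain ⟨i, rfl⟩ := hg_surj c hc
      refine ⟨dust g s e1 (i, fun _ => false), mem_range_self _, ?_⟩
      calc dist x (dust g s e1 (i, fun _ => false))
          ≤ dist x (g i) + dist (g i) (dust g s e1 (i, fun _ => false)) := dist_triangle _ _ _
        _ ≤ γ * Real.sqrt N + 2 * s := by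
            have := dust_dist g hs e1 he1 (i, fun _ => false)
            rw [dist_comm] at this
            exact add_le_add hdc this
        _ ≤ γ * Real.sqrt N + γ + 2*s := by linarith
  · -- the ball of radius s around Y avoids the bad set
    refine ⟨s, hs, ?_⟩
    rintro Z hZd ⟨L, hLbot, -, x, hxZ, -, hinf⟩
    have hYne' : (Set.range (dust g s e1)).Nonempty := hYne
    have hfinZY : EMetric.hausdorffEdist (Z : Set E) (Set.range (dust g s e1)) ≠ ⊤ :=
      hausdorffEdist_ne_top_of_nonempty_of_bounded Z.nonempty hYne'
        Z.isCompact.isBounded hYcpt.isBounded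
    obtain ⟨y, hyY, hxy⟩ := exists_dist_lt_of_hausdorffDist_lt hxZ hZd hfinZY
    obtain ⟨⟨i, a⟩, rfl⟩ := hyY
    have hdyg : dist (dust g s e1 (i, a)) (g i) ≤ 2*s := dust_dist g hs e1 he1 _
    obtain ⟨c', hc'C, hlow, hdcc'⟩ := hbuddy (g i) (hg_mem i) L hLbot
    obtain ⟨i', rfl⟩ := hg_surj c' hc'C
    have hy'Y : dust g s e1 (i', fun _ => false) ∈ Set.range (dust g s e1) := mem_range_self _
    obtain ⟨z', hz'Z, hz'y'⟩ := exists_dist_lt_of_hausdorffDist_lt' hy'Y hZd hfinZY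
    have hdy'g : dist (dust g s e1 (i', fun _ => false)) (g i') ≤ 2*s :=
      dust_dist g hs e1 he1 _
    -- distance bounds
    have hxgi : dist x (g i) < 3*s := by
      calc dist x (g i) ≤ dist x (dust g s e1 (i,a)) + dist (dust g s e1 (i,a)) (g i) :=
            dist_triangle _ _ _
        _ < s + 2*s := add_lt_add_of_lt_of_le hxy hdyg
        _ = 3*s := by ring
    have hz'gi' : dist z' (g i') < 3*s := by
      calc dist z' (g i') ≤ dist z' (dust g s e1 (i', fun _ => false))
            + dist (dust g s e1 (i', fun _ => false)) (g i') := dist_triangle _ _ _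
        _ < s + 2*s := add_lt_add_of_lt_of_le hz'y' hdy'g
        _ = 3*s := by ring
    -- projection distance
    have hdecomp : x - z' = (g i - g i') + ((x - g i) - (z' - g i')) := by abel
    have hprojeq : proj L x - proj L z' = proj L (g i - g i') + proj L ((x - g i) - (z' - g i')) := by
      rw [proj_sub, hdecomp, proj_add]
    have hnorm2 : ‖proj L ((x - g i) - (z' - g i'))‖ ≤ 6*s := by
      calc ‖proj L ((x - g i) - (z' - g i'))‖ ≤ ‖(x - g i) - (z' - g i')‖ := norm_proj_le _ _
        _ ≤ ‖x - g i‖ + ‖z' - g i'‖ := norm_sub_le _ _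
        _ ≤ 3*s + 3*s := by
            rw [← dist_eq_norm, ← dist_eq_norm]
            exact add_le_add hxgi.le hz'gi'.le
        _ = 6*s := by ring
    have h6s : 6*s = γ / (4 * Real.sqrt N) := by
      rw [hsdef]; field_simp; ring
    have hlow2 : γ / (4 * Real.sqrt N) ≤ ‖proj L x - proj L z'‖ := by
      have h1 : ‖proj L (g i - g i')‖ ≤ ‖proj L x - proj L z'‖
          + ‖proj L ((x - g i) - (z' - g i'))‖ := by
        calc ‖proj L (g i - g i')‖
            = ‖(proj L x - proj L z') - proj L ((x - g i) - (z' - g i'))‖ := by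
              rw [hprojeq]; congr 1; abel
          _ ≤ ‖proj L x - proj L z'‖ + ‖proj L ((x - g i) - (z' - g i'))‖ := norm_sub_le _ _
      have h2 : γ / (2 * Real.sqrt N) - 6*s ≤ ‖proj L x - proj L z'‖ := by linarith
      have h3 : γ / (2 * Real.sqrt N) - γ / (4 * Real.sqrt N) = γ / (4 * Real.sqrt N) := by
        field_simp; ring
      rw [← h6s] at h3
      linarith
    have hpos : (0:ℝ) < γ / (4 * Real.sqrt N) := by positivity
    have hhigh : ‖proj L x - proj L z'‖ < 1/k := by
      have h1 : ‖proj L x - proj L z'‖ ≤ ‖x - z'‖ := by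
        rw [proj_sub]; exact norm_proj_le _ _
      have h2 : ‖x - z'‖ ≤ dist x (g i) + dist (g i) (g i') + dist (g i') z' := by
        rw [← dist_eq_norm]
        calc dist x z' ≤ dist x (g i') + dist (g i') z' := dist_triangle _ _ _
          _ ≤ (dist x (g i) + dist (g i) (g i')) + dist (g i') z' :=
              add_le_add_left (dist_triangle _ _ _) _
      have h3 : dist (g i') z' < 3*s := by rw [dist_comm]; exact hz'gi'
      have h4 : ‖x - z'‖ < 2*γ + 6*s := by linarith
      have h5 : 2*γ + 6*s ≤ 3*γ := by
        rw [h6s]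
        have : γ / (4 * Real.sqrt N) ≤ γ := by
          rw [div_le_iff₀ (by positivity)]
          nlinarith
        linarith
      have h6 : 3*γ ≤ μ / 2 := by
        have h66 : γ * (6 * Real.sqrt N) = μ := by rw [hγdef]; field_simp
        have := mul_le_mul_of_nonneg_left hsqrt hγ.le
        nlinarith
      have h7 : μ ≤ 1/k := min_le_right _ _
      linarith
    -- contradiction
    have hne' : proj L z' ≠ proj L x := by
      intro h
      rw [h, sub_self, norm_zero] at hlow2
      linarith
    have hmem : proj L z' ∈ (proj L '' (Z : Set E)) \ {proj L x} :=
      ⟨mem_image_of_mem _ hz'Z, hne'⟩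
    have : infDist (proj L x) ((proj L '' (Z : Set E)) \ {proj L x})
        ≤ dist (proj L x) (proj L z') := infDist_le_dist_of_mem hmem
    rw [dist_eq_norm] at this
    linarith
end master

theorem stmt_12 (N : ℕ) (hN : 1 ≤ N) (k : ℕ) (hk : 0 < k) :
    IsNowhereDense {X : CantorSets N | ∃ L : Submodule ℝ (EuclideanSpace ℝ (Fin N)),
        L ≠ ⊥ ∧ L ≠ ⊤ ∧ ∃ x ∈ (X.1 : Set (EuclideanSpace ℝ (Fin N))),
          (proj L '' (X.1 : Set (EuclideanSpace ℝ (Fin N)))).Nontrivial ∧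
          (1 : ℝ) / k ≤ Metric.infDist (proj L x)
            ((proj L '' (X.1 : Set (EuclideanSpace ℝ (Fin N)))) \ {proj L x})} := by
  set S := {X : CantorSets N | ∃ L : Submodule ℝ (EuclideanSpace ℝ (Fin N)),
        L ≠ ⊥ ∧ L ≠ ⊤ ∧ ∃ x ∈ (X.1 : Set (EuclideanSpace ℝ (Fin N))),
          (proj L '' (X.1 : Set (EuclideanSpace ℝ (Fin N)))).Nontrivial ∧
          (1 : ℝ) / k ≤ Metric.infDist (proj L x)
            ((proj L '' (X.1 : Set (EuclideanSpace ℝ (Fin N)))) \ {proj L x})} with hS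
  rw [IsNowhereDense, Set.eq_empty_iff_forall_notMem]
  intro X₀ hX₀
  obtain ⟨r, hr, hball⟩ := Metric.isOpen_iff.mp isOpen_interior X₀ hX₀
  have hball' : ball X₀ r ⊆ closure S := hball.trans interior_subset
  obtain ⟨Y, hYc, hYd, η, hη, hY⟩ := master hN k hk X₀.1 (half_pos hr)
  set Ysub : CantorSets N := ⟨Y, hYc⟩ with hYsub
  have hYball : Ysub ∈ ball X₀ r := by
    rw [mem_ball, Subtype.dist_eq, Metric.NonemptyCompacts.dist_eq]
    calc hausdorffDist (Y : Set (EuclideanSpace ℝ (Fin N))) (X₀.1 : Set (EuclideanSpace ℝ (Fin N)))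
        < r/2 := hYd
      _ < r := by linarith
  have hYcl : Ysub ∈ closure S := hball' hYball
  rw [Metric.mem_closure_iff] at hYcl
  obtain ⟨Z, hZS, hZd⟩ := hYcl η hη
  apply hY Z.1 _ hZS
  have h1 : dist Ysub Z = hausdorffDist (Y : Set (EuclideanSpace ℝ (Fin N)))
      (Z.1 : Set (EuclideanSpace ℝ (Fin N))) := rfl
  rw [Metric.hausdorffDist_comm, ← h1]
  exact hZd
end
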